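/- arXiv:1306.0093 — 5 statements merged into one kernel-verified Lean document; each statement's English description precedes it below -/
import Mathlib

section
/- For real symmetric matrices A and B of order n, and any 1 ≤ k ≤ n, the sum of the k largest eigenvalues of A+B is at most the sum of the k largest eigenvalues of A plus the sum of the k largest eigenvalues of B. -/
open Matrix

/-- Sum of the `k` largest entries of a finitely-indexed family of reals. -/
noncomputable def sumKLargest {V : Type*} [Fintype V] (v : V → ℝ) (k : ℕ) : ℝ :=
  (((Finset.univ.val.map v).toList.mergeSort (fun a b => decide (b ≤ a))).take k).sum

lemma sumKLargest_spec {n k : ℕ} (v : Fin n → ℝ) (hk1 : 1 ≤ k) (hkn : k ≤ n) :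
    ∃ (S : Finset (Fin n)) (θ : ℝ), S.card = k ∧ (∑ i ∈ S, v i) = sumKLargest v k ∧
      (∀ i ∈ S, θ ≤ v i) ∧ (∀ i ∉ S, v i ≤ θ) := by
  classical
  set σ := Tuple.sort v with hσ
  have hw : Monotone (v ∘ σ) := Tuple.monotone_sort v
  set e : Equiv.Perm (Fin n) := Fin.revPerm.trans σ with he
  set d : Fin n → ℝ := fun i => v (e i) with hd
  have hde : ∀ i, d i = (v ∘ σ) (Fin.rev i) := fun i => rfl
  have hdanti : ∀ i j : Fin n, i < j → d j ≤ d i := by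
    intro i j hij
    rw [hde, hde]
    exact hw (Fin.rev_le_rev.mpr hij.le)
  -- the sorted list equals List.ofFn d
  have hL : (Finset.univ.val.map v).toList.mergeSort (fun a b => decide (b ≤ a)) =
      List.ofFn d := by
    refine (fun hp h1 h2 => List.Perm.eq_of_pairwise (le := fun a b : ℝ => b ≤ a)
      (fun a b _ _ hab hba => le_antisymm hba hab) h1 h2 hp) ?_ ?_ ?_
    · -- perm
      rw [← Multiset.coe_eq_coe]
      have h1 : ((Finset.univ.val.map v).toList.mergeSort (fun a b => decide (b ≤ a)) :
          Multiset ℝ) = Finset.univ.val.map v := by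
        have := Multiset.coe_eq_coe.mpr
          (List.mergeSort_perm (Finset.univ.val.map v).toList (fun a b : ℝ => decide (b ≤ a)))
        rw [this, Multiset.coe_toList]
      have h2 : ((List.ofFn d : List ℝ) : Multiset ℝ) = Finset.univ.val.map v := by
        rw [List.ofFn_eq_map]
        have huniv : (Finset.univ.val : Multiset (Fin n)) = ↑(List.finRange n) := rfl
        calc ((List.map d (List.finRange n) : List ℝ) : Multiset ℝ)
            = Multiset.map d ↑(List.finRange n) := by rw [Multiset.map_coe]
          _ = Multiset.map d Finset.univ.val := by rw [huniv]
          _ = Multiset.map v (Multiset.map e Finset.univ.val) := by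
              rw [Multiset.map_map]; rfl
          _ = Multiset.map v Finset.univ.val := by
              congr 1
              have := Finset.map_univ_equiv e
              calc Multiset.map e Finset.univ.val
                  = (Finset.univ.map e.toEmbedding).val := by rw [Finset.map_val]; rfl
                _ = Finset.univ.val := by rw [this]
      rw [h1, h2]
    · -- mergeSort sorted
      have := List.pairwise_mergeSort (le := fun a b : ℝ => decide (b ≤ a))
        (fun a b c h₁ h₂ => by simp at *; linarith)
        (fun a b => by simpa using le_total b a)
        (Finset.univ.val.map v).toList
      refine this.imp ?_
      intro a b h; simpa using h
    · rw [List.pairwise_ofFn]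
      intro i j hij; exact hdanti i j hij
  have hdanti_le : ∀ i j : Fin n, i ≤ j → d j ≤ d i := by
    intro i j hij
    rcases eq_or_lt_of_le hij with rfl | h
    · exact le_rfl
    · exact hdanti i j h
  -- now take the set
  have hn : 0 < n := lt_of_lt_of_le hk1 hkn
  set T : Finset (Fin n) := Finset.univ.filter (fun j : Fin n => j.val < k) with hT
  set S : Finset (Fin n) := T.image e with hS
  have hTcard : T.card = k := by
    have : T = Finset.map (Fin.castLEEmb hkn) Finset.univ := by
      ext j
      simp only [hT, Finset.mem_filter, Finset.mem_univ, true_and, Finset.mem_map,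
        Fin.castLEEmb, Function.Embedding.coeFn_mk]
      constructor
      · intro hj; exact ⟨⟨j.val, hj⟩, rfl⟩
      · rintro ⟨i, -, rfl⟩; exact lt_of_lt_of_le i.isLt le_rfl
    rw [this, Finset.card_map, Finset.card_univ, Fintype.card_fin]
  have hinj : Set.InjOn e T := fun a _ b _ h => e.injective h
  have hScard : S.card = k := by rw [hS, Finset.card_image_of_injOn hinj, hTcard]
  have hsum : (∑ i ∈ S, v i) = sumKLargest v k := by
    rw [hS, Finset.sum_image (fun a ha b hb h => e.injective h)]
    rw [sumKLargest, hL, List.sum_take_ofFn]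
  have hk1n : k - 1 < n := by omega
  refine ⟨S, d ⟨k - 1, hk1n⟩, hScard, hsum, ?_, ?_⟩
  · rintro i hi
    rw [hS, Finset.mem_image] at hi
    obtain ⟨j, hj, rfl⟩ := hi
    rw [hT, Finset.mem_filter] at hj
    have : d j ≤ v (e j) := le_of_eq rfl
    have hle : (⟨k - 1, hk1n⟩ : Fin n) ≤ j ∨ j ≤ ⟨k - 1, hk1n⟩ := le_total _ _
    have hj' : j ≤ (⟨k - 1, hk1n⟩ : Fin n) := by
      rw [Fin.le_def]; simp; omega
    have := hdanti_le j ⟨k - 1, hk1n⟩ hj'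
    exact this
  · intro i hi
    obtain ⟨j, rfl⟩ := e.surjective i
    have hj : j ∉ T := by
      intro h; exact hi (Finset.mem_image_of_mem e h)
    rw [hT, Finset.mem_filter] at hj
    have hj' : (⟨k - 1, hk1n⟩ : Fin n) ≤ j := by
      rw [Fin.le_def]; simp at hj ⊢; omega
    exact hdanti_le ⟨k - 1, hk1n⟩ j hj'

lemma weighted_le_top {n k : ℕ} (v t : Fin n → ℝ) (S : Finset (Fin n)) (θ : ℝ)
    (hScard : S.card = k) (hθ1 : ∀ i ∈ S, θ ≤ v i) (hθ2 : ∀ i ∉ S, v i ≤ θ)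
    (h0 : ∀ i, 0 ≤ t i) (h1 : ∀ i, t i ≤ 1) (hs : ∑ i, t i = k) :
    ∑ i, t i * v i ≤ ∑ i ∈ S, v i := by
  classical
  have hsplit : ∑ i, t i * v i = ∑ i ∈ S, t i * v i + ∑ i ∈ Sᶜ, t i * v i :=
    (Finset.sum_add_sum_compl S _).symm
  have hsplit' : ∑ i ∈ S, t i + ∑ i ∈ Sᶜ, t i = k := by
    rw [Finset.sum_add_sum_compl]; exact hs
  have hS : ∑ i ∈ S, t i * v i ≤ ∑ i ∈ S, (v i + (t i - 1) * θ) := by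
    apply Finset.sum_le_sum
    intro i hi
    have h : (t i - 1) * v i ≤ (t i - 1) * θ := by
      apply mul_le_mul_of_nonpos_left (hθ1 i hi)
      linarith [h1 i]
    nlinarith [h]
  have hSc : ∑ i ∈ Sᶜ, t i * v i ≤ ∑ i ∈ Sᶜ, t i * θ := by
    apply Finset.sum_le_sum
    intro i hi
    exact mul_le_mul_of_nonneg_left (hθ2 i (Finset.mem_compl.mp hi)) (h0 i)
  have key : ∑ i ∈ S, (v i + (t i - 1) * θ) + ∑ i ∈ Sᶜ, t i * θ = ∑ i ∈ S, v i := by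
    rw [Finset.sum_add_distrib, ← Finset.sum_mul, ← Finset.sum_mul,
      Finset.sum_sub_distrib, Finset.sum_const, hScard]
    have : (∑ i ∈ S, t i - (k : ℝ)) * θ + (∑ i ∈ Sᶜ, t i) * θ = 0 := by
      have h2 : (∑ i ∈ S, t i - (k:ℝ)) * θ + (∑ i ∈ Sᶜ, t i) * θ
          = (∑ i ∈ S, t i + ∑ i ∈ Sᶜ, t i - k) * θ := by ring
      rw [h2, hsplit']; ring
    simp only [nsmul_eq_mul]
    linarith [this]
  linarith [hsplit, hS, hSc, key]

lemma conj_diag_sum_le {n k : ℕ} (M : Matrix (Fin n) (Fin n) ℝ) (hM : M.IsHermitian)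
    (W : Matrix (Fin n) (Fin n) ℝ) (hW : W ∈ Matrix.unitaryGroup (Fin n) ℝ)
    (S : Finset (Fin n)) (hS : S.card = k) (hk1 : 1 ≤ k) (hkn : k ≤ n) :
    ∑ i ∈ S, (star W * M * W) i i ≤ sumKLargest hM.eigenvalues k := by
  classical
  set U : Matrix (Fin n) (Fin n) ℝ := (hM.eigenvectorUnitary : Matrix (Fin n) (Fin n) ℝ) with hU
  have hUmem : U ∈ Matrix.unitaryGroup (Fin n) ℝ := hM.eigenvectorUnitary.2
  set Q : Matrix (Fin n) (Fin n) ℝ := star W * U with hQ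
  have hQmem : Q ∈ Matrix.unitaryGroup (Fin n) ℝ := mul_mem (Unitary.star_mem hW) hUmem
  have hspec : M = U * Matrix.diagonal hM.eigenvalues * star U := by
    have := hM.spectral_theorem
    simpa using this
  have hconj : star W * M * W = Q * Matrix.diagonal hM.eigenvalues * star Q := by
    conv_lhs => rw [hspec]
    rw [hQ, StarMul.star_mul, star_star]
    noncomm_ring
  have hentry : ∀ i, (Q * Matrix.diagonal hM.eigenvalues * star Q) i i
      = ∑ j, (Q i j)^2 * hM.eigenvalues j := by
    intro i
    rw [Matrix.mul_apply]
    congr 1; ext j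
    rw [Matrix.mul_diagonal]
    simp [Matrix.star_apply, Matrix.conjTranspose_apply]
    ring
  set t : Fin n → ℝ := fun j => ∑ i ∈ S, (Q i j)^2 with ht
  have hQQ : star Q * Q = 1 := (Matrix.mem_unitaryGroup_iff').mp hQmem
  have hQQ' : Q * star Q = 1 := (Matrix.mem_unitaryGroup_iff).mp hQmem
  have ht0 : ∀ j, 0 ≤ t j := fun j => Finset.sum_nonneg fun i _ => sq_nonneg _
  have ht1 : ∀ j, t j ≤ 1 := by
    intro j
    have hfull : ∑ i, (Q i j)^2 = 1 := by
      have : (star Q * Q) j j = (1 : Matrix (Fin n) (Fin n) ℝ) j j := by rw [hQQ]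
      rw [Matrix.mul_apply] at this
      simp [Matrix.one_apply, Matrix.star_apply, Matrix.conjTranspose_apply] at this
      rw [← this]
      congr 1; ext i; ring
    calc t j ≤ ∑ i, (Q i j)^2 :=
          Finset.sum_le_sum_of_subset_of_nonneg (Finset.subset_univ S)
            (fun i _ _ => sq_nonneg _)
      _ = 1 := hfull
  have hts : ∑ j, t j = k := by
    rw [ht]
    rw [Finset.sum_comm]
    have hrow : ∀ i, ∑ j, (Q i j)^2 = 1 := by
      intro i
      have : (Q * star Q) i i = (1 : Matrix (Fin n) (Fin n) ℝ) i i := by rw [hQQ']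
      rw [Matrix.mul_apply] at this
      simp [Matrix.one_apply, Matrix.star_apply, Matrix.conjTranspose_apply] at this
      rw [← this]
      congr 1; ext j; ring
    rw [Finset.sum_congr rfl fun i _ => hrow i]
    simp [hS]
  obtain ⟨S', θ, hS'card, hS'sum, hθ1, hθ2⟩ := sumKLargest_spec hM.eigenvalues hk1 hkn
  calc ∑ i ∈ S, (star W * M * W) i i
      = ∑ i ∈ S, ∑ j, (Q i j)^2 * hM.eigenvalues j := by
        rw [hconj] at *
        exact Finset.sum_congr rfl fun i _ => hentry i
    _ = ∑ j, t j * hM.eigenvalues j := by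
        rw [Finset.sum_comm]
        exact Finset.sum_congr rfl fun j _ => by rw [ht, Finset.sum_mul]
    _ ≤ ∑ i ∈ S', hM.eigenvalues i :=
        weighted_le_top hM.eigenvalues t S' θ hS'card hθ1 hθ2 ht0 ht1 hts
    _ = sumKLargest hM.eigenvalues k := hS'sum

/-- For real symmetric matrices `A` and `B` of order `n`, and any `1 ≤ k ≤ n`,
the sum of the `k` largest eigenvalues of `A + B` is at most the sum of the `k` largest
eigenvalues of `A` plus the sum of the `k` largest eigenvalues of `B`. -/
theorem sum_k_largest_eigenvalues_add {n : ℕ} (A B : Matrix (Fin n) (Fin n) ℝ)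
    (hA : A.IsHermitian) (hB : B.IsHermitian) (k : ℕ) (hk1 : 1 ≤ k) (hkn : k ≤ n) :
    sumKLargest (hA.add hB).eigenvalues k ≤
      sumKLargest hA.eigenvalues k + sumKLargest hB.eigenvalues k := by
  classical
  have hC : (A + B).IsHermitian := hA.add hB
  set W : Matrix (Fin n) (Fin n) ℝ := (hC.eigenvectorUnitary : Matrix (Fin n) (Fin n) ℝ)
    with hW
  have hWmem : W ∈ Matrix.unitaryGroup (Fin n) ℝ := hC.eigenvectorUnitary.2
  have hdiag : star W * (A + B) * W = Matrix.diagonal hC.eigenvalues := by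
    have := hC.conjStarAlgAut_star_eigenvectorUnitary
    simpa using this
  obtain ⟨S, θ, hScard, hSsum, -, -⟩ := sumKLargest_spec hC.eigenvalues hk1 hkn
  have hsplit : star W * (A + B) * W = star W * A * W + star W * B * W := by
    rw [mul_add, add_mul]
  calc sumKLargest (hA.add hB).eigenvalues k
      = ∑ i ∈ S, hC.eigenvalues i := hSsum.symm
    _ = ∑ i ∈ S, (star W * (A + B) * W) i i := by
        rw [hdiag]
        exact Finset.sum_congr rfl fun i _ => (Matrix.diagonal_apply_eq _ i).symm
    _ = ∑ i ∈ S, (star W * A * W) i i + ∑ i ∈ S, (star W * B * W) i i := by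
        rw [hsplit, ← Finset.sum_add_distrib]
        exact Finset.sum_congr rfl fun i _ => rfl
    _ ≤ sumKLargest hA.eigenvalues k + sumKLargest hB.eigenvalues k :=
        add_le_add (conj_diag_sum_le A hA W hWmem S hScard hk1 hkn)
          (conj_diag_sum_le B hB W hWmem S hScard hk1 hkn)
end

section
/- Let G be a graph with clique number ω. Then for any 1 ≤ k ≤ ω, the sum of the k largest signless Laplacian eigenvalues of G satisfies S⁺_k(G) ≤ 2e(G) − ω² + (k+2)ω − 2k. -/
open Matrix Polynomial

open Classical in
/-- The signless Laplacian matrix `Q(G) = D(G) + A(G)` of a simple graph. -/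
noncomputable def signlessLap {V : Type*} [Fintype V] [DecidableEq V]
    (G : SimpleGraph V) : Matrix V V ℝ :=
  G.degMatrix ℝ + G.adjMatrix ℝ

theorem signlessLap_isHermitian {V : Type*} [Fintype V] [DecidableEq V]
    (G : SimpleGraph V) : (signlessLap G).IsHermitian := by
  classical
  ext i j
  by_cases h : i = j
  · subst h; simp [signlessLap]
  · simp [signlessLap, Matrix.conjTranspose_apply, SimpleGraph.degMatrix,
      Matrix.diagonal_apply, h, Ne.symm h, SimpleGraph.adj_comm]

/-- `S⁺_k(G)`: the sum of the `k` largest signless Laplacian eigenvalues of `G`. -/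
noncomputable def Splus {V : Type*} [Fintype V] [DecidableEq V]
    (G : SimpleGraph V) (k : ℕ) : ℝ :=
  sumKLargest (signlessLap_isHermitian G).eigenvalues k

/-- `e(G)`: the number of edges of `G`. -/
noncomputable def numEdges {V : Type*} (G : SimpleGraph V) : ℕ := G.edgeSet.ncard

/-! ### Auxiliary lemmas -/

theorem signlessLap_posSemidef {V : Type*} [Fintype V] [DecidableEq V]
    (G : SimpleGraph V) : (signlessLap G).PosSemidef := by
  classical
  have h : signlessLap G = G.incMatrix ℝ * (G.incMatrix ℝ)ᵀ := by
    rw [SimpleGraph.incMatrix_mul_transpose]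
    ext a b
    by_cases h : a = b
    · subst h; simp [signlessLap, SimpleGraph.degMatrix]
    · simp [signlessLap, SimpleGraph.degMatrix, Matrix.diagonal_apply_ne _ h, h]
  rw [h]
  have := Matrix.posSemidef_self_mul_conjTranspose (G.incMatrix ℝ)
  rwa [Matrix.conjTranspose_eq_transpose_of_trivial] at this

theorem sum_eigenvalues_eq_trace' {V : Type*} [Fintype V] [DecidableEq V]
    {A : Matrix V V ℝ} (hA : A.IsHermitian) :
    ∑ i, hA.eigenvalues i = A.trace := by
  conv_rhs => rw [hA.spectral_theorem, Unitary.conjStarAlgAut_apply]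
  rw [Matrix.trace_mul_cycle]
  have hu : (star (hA.eigenvectorUnitary : Matrix V V ℝ)) *
      (hA.eigenvectorUnitary : Matrix V V ℝ) = 1 :=
    Matrix.mem_unitaryGroup_iff'.mp hA.eigenvectorUnitary.2
  rw [hu, Matrix.one_mul, Matrix.trace_diagonal]
  simp [RCLike.ofReal]

theorem signlessLap_dot {V : Type*} [Fintype V] [DecidableEq V]
    (G : SimpleGraph V) [DecidableRel G.Adj] (x : V → ℝ) :
    x ⬝ᵥ (signlessLap G *ᵥ x) = ∑ v, (G.degree v : ℝ) * x v ^ 2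
      + ∑ v, ∑ u, (if G.Adj v u then x v * x u else 0) := by
  classical
  simp only [signlessLap, Matrix.add_mulVec, dotProduct_add]
  congr 1
  · simp only [dotProduct, SimpleGraph.degMatrix, Matrix.mulVec_diagonal]
    refine Finset.sum_congr rfl fun v _ => ?_
    ring_nf
    congr 2
    congr 1
    exact Subsingleton.elim _ _
  · simp only [dotProduct, Matrix.mulVec, SimpleGraph.adjMatrix_apply, Finset.mul_sum]
    refine Finset.sum_congr rfl fun v _ => Finset.sum_congr rfl fun u _ => ?_
    by_cases h : G.Adj v u <;> simp [h]

theorem card_eig_ge_of_clique {V : Type*} [Fintype V] [DecidableEq V]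
    (G : SimpleGraph V) [DecidableRel G.Adj] {A : Matrix V V ℝ} (hA : A.IsHermitian)
    (hexp : ∀ x : V → ℝ, x ⬝ᵥ (A *ᵥ x) =
      ∑ v, (G.degree v : ℝ) * x v ^ 2 + ∑ v, ∑ u, (if G.Adj v u then x v * x u else 0))
    (ω : ℕ) (s : Finset V) (hs : G.IsNClique ω s) :
    ω ≤ (Finset.univ.filter (fun i => ((ω : ℝ) - 2) ≤ hA.eigenvalues i)).card := by
  classical
  by_contra hcon
  push_neg at hcon
  have hω1 : 1 ≤ ω := by omega
  set lam := hA.eigenvalues with hlam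
  set c : ℝ := (ω : ℝ) - 2 with hc
  set T := Finset.univ.filter (fun i => c ≤ lam i) with hT
  set U : Matrix V V ℝ := (hA.eigenvectorUnitary : Matrix V V ℝ) with hU
  let E : (↥s → ℝ) →ₗ[ℝ] (V → ℝ) :=
    { toFun := fun z v => if h : v ∈ s then z ⟨v, h⟩ else 0
      map_add' := by intro z w; funext v; by_cases h : v ∈ s <;> simp [h]
      map_smul' := by intro r z; funext v; by_cases h : v ∈ s <;> simp [h] }
  let L : (↥s → ℝ) →ₗ[ℝ] (↥T → ℝ) :=
    (LinearMap.funLeft ℝ ℝ (fun i : ↥T => (i : V))).comp ((Matrix.mulVecLin (star U)).comp E)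
  have hninj : ¬ Function.Injective L := by
    intro h
    have h2 := LinearMap.finrank_le_finrank_of_injective h
    rw [Module.finrank_fintype_fun_eq_card, Module.finrank_fintype_fun_eq_card,
      Fintype.card_coe, Fintype.card_coe, hs.2] at h2
    omega
  have hker : LinearMap.ker L ≠ ⊥ := fun h => hninj (LinearMap.ker_eq_bot.mp h)
  obtain ⟨z, hz, hz0⟩ := Submodule.exists_mem_ne_zero_of_ne_bot hker
  rw [LinearMap.mem_ker] at hz
  set x : V → ℝ := E z with hx
  set y : V → ℝ := star U *ᵥ x with hy
  have hyT : ∀ i ∈ T, y i = 0 := by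
    intro i hi
    exact congrFun hz ⟨i, hi⟩
  have hxs : ∀ v, v ∉ s → x v = 0 := by
    intro v hv; simp [hx, E, hv]
  have hxne : x ≠ 0 := by
    intro h
    apply hz0
    funext v
    have := congrFun h v.1
    simpa [hx, E, v.2] using this
  have hstar : star U = Uᵀ := by
    ext i j; simp [Matrix.star_eq_conjTranspose, Matrix.conjTranspose_apply]
  have key1 : x ⬝ᵥ (A *ᵥ x) = ∑ i, lam i * y i ^ 2 := by
    conv_lhs => rw [hA.spectral_theorem, Unitary.conjStarAlgAut_apply]
    rw [← Matrix.mulVec_mulVec, ← Matrix.mulVec_mulVec, Matrix.dotProduct_mulVec]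
    have hxy : x ᵥ* ↑U = y := by rw [hy, hstar, Matrix.mulVec_transpose]
    rw [hxy]
    simp only [dotProduct, Matrix.mulVec_diagonal, Function.comp_apply]
    refine Finset.sum_congr rfl fun i _ => ?_
    simp [RCLike.ofReal]; ring
  have key2 : x ⬝ᵥ x = ∑ i, y i ^ 2 := by
    have huu : (U : Matrix V V ℝ) * star U = 1 :=
      Matrix.mem_unitaryGroup_iff.mp hA.eigenvectorUnitary.2
    have h1 : x ⬝ᵥ x = y ⬝ᵥ y := by
      conv_rhs => rw [hy]
      rw [Matrix.dotProduct_mulVec y (star U) x, hstar, ← Matrix.mulVec_transpose (Uᵀ) y,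
        Matrix.transpose_transpose, hy, hstar, Matrix.mulVec_mulVec, ← hstar, huu,
        Matrix.one_mulVec]
    rw [h1]
    simp [dotProduct, pow_two]
  have hdeg : ∀ v ∈ s, (ω : ℝ) - 1 ≤ (G.degree v : ℝ) := by
    intro v hv
    have hsub : s.erase v ⊆ G.neighborFinset v := by
      intro u hu
      rw [SimpleGraph.mem_neighborFinset]
      exact hs.1 (Finset.mem_coe.mpr hv)
        (Finset.mem_coe.mpr (Finset.mem_of_mem_erase hu)) (Finset.ne_of_mem_erase hu).symm
    have hcard := Finset.card_le_card hsub
    rw [Finset.card_erase_of_mem hv, hs.2, SimpleGraph.card_neighborFinset_eq_degree] at hcard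
    have : ((ω - 1 : ℕ) : ℝ) ≤ (G.degree v : ℝ) := by exact_mod_cast hcard
    rw [Nat.cast_sub hω1] at this
    simpa using this
  have hxx2 : x ⬝ᵥ x = ∑ v, x v ^ 2 := by simp [dotProduct, pow_two]
  have hS2 : ∑ v, ∑ u, (if G.Adj v u then x v * x u else 0)
      = (∑ v, x v) ^ 2 - ∑ v, x v ^ 2 := by
    have hpt : ∀ v u, (if G.Adj v u then x v * x u else 0)
        = x v * x u - (if v = u then x v * x u else 0) := by
      intro v u
      by_cases h : v = u
      · subst h; simp [SimpleGraph.irrefl]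
      · by_cases ha : G.Adj v u
        · simp [ha, h]
        · have hz : x v * x u = 0 := by
            by_cases hv : v ∈ s
            · by_cases hu : u ∈ s
              · exact absurd (hs.1 (Finset.mem_coe.mpr hv) (Finset.mem_coe.mpr hu) h) ha
              · simp [hxs u hu]
            · simp [hxs v hv]
          simp [ha, h, hz]
    calc ∑ v, ∑ u, (if G.Adj v u then x v * x u else 0)
        = ∑ v, ∑ u, (x v * x u - (if v = u then x v * x u else 0)) := by
          refine Finset.sum_congr rfl fun v _ => Finset.sum_congr rfl fun u _ => hpt v u
      _ = (∑ v, x v) ^ 2 - ∑ v, x v ^ 2 := by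
          simp only [Finset.sum_sub_distrib]
          congr 1
          · rw [pow_two, Finset.sum_mul_sum]
          · refine Finset.sum_congr rfl fun v _ => ?_
            simp [pow_two]
  have hS1 : ((ω : ℝ) - 1) * ∑ v, x v ^ 2 ≤ ∑ v, (G.degree v : ℝ) * x v ^ 2 := by
    rw [Finset.mul_sum]
    refine Finset.sum_le_sum fun v _ => ?_
    by_cases hv : v ∈ s
    · have := hdeg v hv
      nlinarith [sq_nonneg (x v)]
    · simp [hxs v hv]
  have lower : c * (x ⬝ᵥ x) ≤ x ⬝ᵥ (A *ᵥ x) := by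
    rw [hexp x, hS2, hxx2, hc]
    nlinarith [sq_nonneg (∑ v, x v)]
  have hxxpos : 0 < x ⬝ᵥ x := by
    rw [hxx2]
    obtain ⟨v, hv⟩ := Function.ne_iff.mp hxne
    refine Finset.sum_pos' (fun i _ => sq_nonneg _) ⟨v, Finset.mem_univ v, ?_⟩
    have : x v ≠ 0 := hv
    positivity
  have hex : ∃ i, y i ≠ 0 := by
    by_contra h
    push_neg at h
    rw [key2] at hxxpos
    have : ∑ i, y i ^ 2 = 0 := by
      refine Finset.sum_eq_zero fun i _ => by simp [h i]
    linarith
  have upper : ∑ i, lam i * y i ^ 2 < c * ∑ i, y i ^ 2 := by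
    rw [Finset.mul_sum]
    refine Finset.sum_lt_sum (fun i _ => ?_) ?_
    · by_cases hi : i ∈ T
      · simp [hyT i hi]
      · have hlt : lam i < c := by
          simp only [hT, Finset.mem_filter, Finset.mem_univ, true_and, not_le] at hi
          exact hi
        nlinarith [sq_nonneg (y i)]
    · obtain ⟨i, hi⟩ := hex
      have hiT : i ∉ T := fun h => hi (hyT i h)
      have hlt : lam i < c := by
        simp only [hT, Finset.mem_filter, Finset.mem_univ, true_and, not_le] at hiT
        exact hiT
      have hypos : 0 < y i ^ 2 := by positivity
      exact ⟨i, Finset.mem_univ i, by nlinarith⟩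
  rw [key1, key2] at *
  linarith

lemma list_mul_le_sum (c : ℝ) : ∀ (l : List ℝ), (∀ a ∈ l, c ≤ a) → (l.length : ℝ) * c ≤ l.sum := by
  intro l
  induction l with
  | nil => simp
  | cons a t ih =>
    intro h
    have h1 := h a List.mem_cons_self
    have h2 := ih (fun b hb => h b (List.mem_cons_of_mem a hb))
    simp only [List.length_cons, List.sum_cons]
    push_cast
    linarith

lemma sumKLargest_le {V : Type*} [Fintype V] [DecidableEq V]
    (lam : V → ℝ) (ω k : ℕ) (e : ℝ) (hkω : k ≤ ω)
    (hωn : ω ≤ Fintype.card V)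
    (hnonneg : ∀ i, 0 ≤ lam i)
    (htr : ∑ i, lam i = 2 * e)
    (hcard : ω ≤ (Finset.univ.filter (fun i => ((ω : ℝ) - 2) ≤ lam i)).card) :
    sumKLargest lam k ≤ 2 * e - ((ω : ℝ) - 2) * ((ω : ℝ) - k) := by
  classical
  rw [sumKLargest]
  set c : ℝ := (ω : ℝ) - 2 with hc
  set m : Multiset ℝ := Finset.univ.val.map lam with hm
  set ls : List ℝ := m.toList.mergeSort (fun a b => decide (b ≤ a)) with hls
  show (ls.take k).sum ≤ 2 * e - c * ((ω : ℝ) - k)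
  have hperm : ls.Perm m.toList := List.mergeSort_perm _ _
  have hlen : ls.length = Fintype.card V := by
    rw [hperm.length_eq, Multiset.length_toList, hm]
    simp
  have hsum : ls.sum = ∑ i, lam i := by
    rw [hperm.sum_eq, Multiset.sum_toList, hm]
    rfl
  have hmemnn : ∀ a ∈ ls, (0 : ℝ) ≤ a := by
    intro a ha
    rw [hperm.mem_iff, Multiset.mem_toList, hm, Multiset.mem_map] at ha
    obtain ⟨i, _, rfl⟩ := ha
    exact hnonneg i
  have hsorted : ∀ (i j : ℕ) (_ : i < j) (hj : j < ls.length),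
      ls[j]'hj ≤ ls[i]'(lt_trans ‹i < j› hj) := by
    have hp := List.pairwise_mergeSort (le := fun a b : ℝ => decide (b ≤ a))
      (fun a b c h1 h2 => by
        simp only [decide_eq_true_eq] at *
        exact le_trans h2 h1)
      (fun a b => by
        simp only [Bool.or_eq_true, decide_eq_true_eq]
        exact le_total b a) m.toList
    rw [List.pairwise_iff_getElem] at hp
    intro i j hij hj
    have := hp i j (lt_trans hij hj) hj hij
    simpa using this
  have hcount : ω ≤ ls.countP (fun a => decide (c ≤ a)) := by
    have e1 : ls.countP (fun a => decide (c ≤ a)) = m.toList.countP (fun a => decide (c ≤ a)) :=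
      List.Perm.countP_eq _ hperm
    have e2 : m.toList.countP (fun a => decide (c ≤ a)) = Multiset.countP (fun a => c ≤ a) m := by
      rw [← Multiset.coe_countP, Multiset.coe_toList]
    rw [e1, e2, hm, Multiset.countP_map]
    exact hcard
  have hpos : ∀ (j : ℕ) (hj : j < ls.length), j < ω → c ≤ ls[j]'hj := by
    intro j hj hjω
    by_contra hlt
    push_neg at hlt
    have hdz : (ls.drop j).countP (fun a => decide (c ≤ a)) = 0 := by
      rw [List.countP_eq_zero]
      intro a ha
      obtain ⟨i, hi, rfl⟩ := List.mem_iff_getElem.mp ha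
      have hji : j + i < ls.length := by
        have := hi; simp only [List.length_drop] at this; omega
      have hle : ls[j + i]'hji ≤ ls[j]'hj := by
        rcases Nat.eq_zero_or_pos i with h0 | h0
        · subst h0; exact le_of_eq (by congr)
        · exact hsorted j (j + i) (by omega) hji
      rw [List.getElem_drop]
      simp only [decide_eq_true_eq, not_le]
      linarith
    have h0 : ls.countP (fun a => decide (c ≤ a)) ≤ j := by
      conv_lhs => rw [← List.take_append_drop j ls]
      rw [List.countP_append, hdz, Nat.add_zero]
      calc (ls.take j).countP (fun a => decide (c ≤ a)) ≤ (ls.take j).length :=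
            List.countP_le_length
        _ ≤ j := by rw [List.length_take]; omega
    omega
  have hsplit : (ls.take k).sum + (ls.drop k).sum = ls.sum := List.sum_take_add_sum_drop ls k
  set t : List ℝ := (ls.drop k).take (ω - k) with htdef
  have hlt' : t.length = ω - k := by
    rw [htdef, List.length_take, List.length_drop, hlen]
    omega
  have ht : ∀ a ∈ t, c ≤ a := by
    intro a ha
    obtain ⟨i, hi, rfl⟩ := List.mem_iff_getElem.mp ha
    have hi' : i < ω - k := by rw [hlt'] at hi; exact hi
    have hki : k + i < ls.length := by rw [hlen]; omega
    have heq : t[i]'hi = ls[k + i]'hki := by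
      simp only [htdef, List.getElem_take, List.getElem_drop]
    rw [heq]
    exact hpos (k + i) hki (by omega)
  have h1 : ((ω : ℝ) - k) * c ≤ t.sum := by
    have := list_mul_le_sum c t ht
    rw [hlt'] at this
    rwa [Nat.cast_sub hkω] at this
  have h2 : t.sum ≤ (ls.drop k).sum := by
    have e3 : t.sum + ((ls.drop k).drop (ω - k)).sum = (ls.drop k).sum :=
      List.sum_take_add_sum_drop _ _
    have hnn : 0 ≤ ((ls.drop k).drop (ω - k)).sum :=
      List.sum_nonneg fun a ha => hmemnn a (List.mem_of_mem_drop (List.mem_of_mem_drop ha))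
    linarith
  have h3 : (ls.take k).sum = ls.sum - (ls.drop k).sum := by linarith
  rw [h3, hsum, htr]
  nlinarith [h1, h2]

theorem signlessLap_trace {V : Type*} [Fintype V] [DecidableEq V]
    (G : SimpleGraph V) : (signlessLap G).trace = 2 * (numEdges G : ℝ) := by
  classical
  have hne : numEdges G = G.edgeFinset.card := by
    rw [numEdges, ← SimpleGraph.coe_edgeFinset, Set.ncard_coe_finset]
  have hdsum : ∑ v, G.degree v = 2 * G.edgeFinset.card :=
    SimpleGraph.sum_degrees_eq_twice_card_edges G
  rw [Matrix.trace]
  have : ∀ v, (signlessLap G).diag v = (G.degree v : ℝ) := by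
    intro v
    simp [signlessLap, Matrix.diag, SimpleGraph.degMatrix]
  rw [Finset.sum_congr rfl fun v _ => this v]
  rw [hne]
  rw [← Nat.cast_sum, hdsum]
  push_cast
  try ring_nf

/-- If `G` has clique number `ω`, then for any `1 ≤ k ≤ ω`,
`S⁺_k(G) ≤ 2e(G) − ω² + (k+2)ω − 2k`. -/
theorem splus_le_of_cliqueNum {V : Type*} [Fintype V] [DecidableEq V]
    (G : SimpleGraph V) (ω : ℕ) (hω : G.cliqueNum = ω)
    (k : ℕ) (hk1 : 1 ≤ k) (hkω : k ≤ ω) :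
    Splus G k ≤ 2 * (numEdges G : ℝ) - (ω : ℝ) ^ 2 + ((k : ℝ) + 2) * ω - 2 * k := by
  classical
  obtain ⟨s, hs⟩ := G.exists_isNClique_cliqueNum
  rw [hω] at hs
  have hωn : ω ≤ Fintype.card V := by
    have := Finset.card_le_univ s
    rw [hs.2] at this
    simpa using this
  have hnonneg : ∀ i, 0 ≤ (signlessLap_isHermitian G).eigenvalues i :=
    (signlessLap_posSemidef G).eigenvalues_nonneg
  have htr : ∑ i, (signlessLap_isHermitian G).eigenvalues i = 2 * (numEdges G : ℝ) := by
    rw [sum_eigenvalues_eq_trace', signlessLap_trace]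
  have hcard : ω ≤ (Finset.univ.filter
      (fun i => ((ω : ℝ) - 2) ≤ (signlessLap_isHermitian G).eigenvalues i)).card :=
    card_eig_ge_of_clique G (signlessLap_isHermitian G) (signlessLap_dot G) ω s hs
  have hmain := sumKLargest_le (signlessLap_isHermitian G).eigenvalues ω k
    ((numEdges G : ℝ)) hkω hωn hnonneg htr hcard
  have : Splus G k = sumKLargest (signlessLap_isHermitian G).eigenvalues k := rfl
  rw [this]
  nlinarith [hmain]
end

section
/- Let G be a graph with maximum degree Δ. Then for any 1 ≤ k ≤ Δ, the sum of the k largest signless Laplacian eigenvalues of G satisfies S⁺_k(G) ≤ 2e(G) − Δ + k. -/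
open Matrix Polynomial

/- ========================= auxiliary lemmas ========================= -/

lemma exists_multiset_preimage {α β : Type*} (f : α → β) :
    ∀ (s : Multiset β) (m : Multiset α), s ≤ m.map f → ∃ m', m' ≤ m ∧ m'.map f = s := by
  classical
  intro s
  induction s using Multiset.induction with
  | empty => exact fun m _ => ⟨0, Multiset.zero_le m, rfl⟩
  | cons a s ih =>
    intro m h
    have ha : a ∈ m.map f := Multiset.mem_of_le h (Multiset.mem_cons_self a s)
    obtain ⟨x, hx, rfl⟩ := Multiset.mem_map.mp ha
    have hm : m.map f = f x ::ₘ (m.erase x).map f := by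
      rw [← Multiset.map_cons, Multiset.cons_erase hx]
    rw [hm] at h
    have hs : s ≤ (m.erase x).map f := (Multiset.cons_le_cons_iff _).mp h
    obtain ⟨m', hm', rfl⟩ := ih (m.erase x) hs
    refine ⟨x ::ₘ m', ?_, by simp⟩
    calc x ::ₘ m' ≤ x ::ₘ m.erase x := Multiset.cons_le_cons _ hm'
      _ = m := Multiset.cons_erase hx

lemma sumKLargest_eq_sum_subset {V : Type*} [Fintype V] (v : V → ℝ) (k : ℕ)
    (hk : k ≤ Fintype.card V) :
    ∃ t : Finset V, t.card = k ∧ sumKLargest v k = ∑ i ∈ t, v i := by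
  classical
  set L := (Finset.univ.val.map v).toList with hL
  set ms := L.mergeSort (fun a b => decide (b ≤ a)) with hms
  have hlenL : L.length = Fintype.card V := by
    simp [hL]
  have hlen : ms.length = Fintype.card V := by
    rw [hms, List.length_mergeSort, hlenL]
  have hsub : ((ms.take k : List ℝ) : Multiset ℝ) ≤ Finset.univ.val.map v := by
    calc ((ms.take k : List ℝ) : Multiset ℝ) ≤ (ms : Multiset ℝ) :=
          Multiset.coe_le.mpr (List.take_sublist k ms).subperm
      _ = (L : Multiset ℝ) := Quot.sound (List.mergeSort_perm L _)
      _ = Finset.univ.val.map v := by simp [hL, Multiset.coe_toList]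
  obtain ⟨m', hle, hmap⟩ := exists_multiset_preimage v _ _ hsub
  have hnd : m'.Nodup := Multiset.nodup_of_le hle Finset.univ.nodup
  refine ⟨⟨m', hnd⟩, ?_, ?_⟩
  · show Multiset.card m' = k
    have h1 : Multiset.card (m'.map v) = Multiset.card m' := Multiset.card_map _ _
    rw [hmap] at h1
    rw [← h1]
    simp [List.length_take, hlen, hk]
  · rw [Finset.sum_eq_multiset_sum]
    show sumKLargest v k = (Multiset.map v m').sum
    rw [hmap, Multiset.sum_coe]
    rfl

/-- If `G` has maximum degree `Δ`, then for any `1 ≤ k ≤ Δ`,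
`S⁺_k(G) ≤ 2e(G) − Δ + k`. -/
theorem splus_le_of_maxDegree {V : Type*} [Fintype V] [DecidableEq V]
    (G : SimpleGraph V) [DecidableRel G.Adj] (Δ : ℕ) (hΔ : G.maxDegree = Δ)
    (k : ℕ) (hk1 : 1 ≤ k) (hkΔ : k ≤ Δ) :
    Splus G k ≤ 2 * (numEdges G : ℝ) - (Δ : ℝ) + k := by
  classical
  -- V is nonempty
  have hV : Nonempty V := by
    by_contra h
    haveI : IsEmpty V := not_nonempty_iff.mp h
    have h0 : G.maxDegree ≤ 0 :=
      G.maxDegree_le_of_forall_degree_le 0 fun v => isEmptyElim v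
    omega
  -- a vertex of maximum degree
  obtain ⟨c, hc⟩ := G.exists_maximal_degree_vertex
  have hdeg : G.degree c = Δ := by rw [← hc, hΔ]
  have hkn : k ≤ Fintype.card V := by
    have := G.degree_lt_card_verts c
    omega
  set hQ := signlessLap_isHermitian G with hhQ
  set ev : V → ℝ := hQ.eigenvalues with hev
  set U : V → V → ℝ := fun i a => hQ.eigenvectorBasis i a with hU
  set N : Finset V := G.neighborFinset c with hN
  have hNcard : N.card = Δ := hdeg
  have hcN : c ∉ N := G.notMem_neighborFinset_self c
  have hΔ1 : (1:ℝ) ≤ (Δ:ℝ) := by exact_mod_cast Nat.one_le_cast.mpr (hk1.trans hkΔ)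
  -- orthonormality of rows
  have horth : ∀ i j, (∑ a, U i a * U j a) = if i = j then 1 else 0 := by
    intro i j
    have h := (orthonormal_iff_ite.mp hQ.eigenvectorBasis.orthonormal) i j
    simpa [PiLp.inner_apply, RCLike.inner_apply, hU, mul_comm] using h
  -- orthonormality of columns
  have hcol : ∀ a b, (∑ i, U i a * U i b) = if a = b then 1 else 0 := by
    have hMMt : (Matrix.of U) * (Matrix.of U)ᵀ = 1 := by
      ext i j
      simpa [Matrix.mul_apply, Matrix.one_apply] using horth i j
    have hMtM := mul_eq_one_comm.mp hMMt
    intro a b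
    have h := congrFun (congrFun hMtM a) b
    simpa [Matrix.mul_apply, Matrix.one_apply] using h
  -- the delta summation lemma
  have hdelta : ∀ f : V → V → ℝ,
      (∑ i, ∑ a, ∑ b, f a b * (U i a * U i b)) = ∑ a, f a a := by
    intro f
    rw [Finset.sum_comm]
    refine Finset.sum_congr rfl fun a _ => ?_
    rw [Finset.sum_comm]
    have : ∀ b, (∑ i, f a b * (U i a * U i b)) = f a b * (if a = b then 1 else 0) := by
      intro b
      rw [← Finset.mul_sum, hcol a b]
    rw [Finset.sum_congr rfl fun b _ => this b]
    simp
  -- eigenvector equation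
  have hmv : ∀ i a, ((signlessLap G) *ᵥ U i) a = ev i * U i a := by
    intro i a
    have h := congrFun (hQ.mulVec_eigenvectorBasis i) a
    simpa [hU, hev] using h
  -- eigenvalues as quadratic forms
  have heig : ∀ i, ev i = ∑ a, U i a * ((signlessLap G) *ᵥ U i) a := by
    intro i
    have h1 := horth i i
    rw [if_pos rfl] at h1
    calc ev i = ev i * ∑ a, U i a * U i a := by rw [h1, mul_one]
      _ = ∑ a, U i a * (ev i * U i a) := by
          rw [Finset.mul_sum]; exact Finset.sum_congr rfl fun a _ => by ring
      _ = _ := by simp only [hmv]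
  -- trace lemma
  have htrace : ∀ M : Matrix V V ℝ,
      (∑ i, ∑ a, U i a * (M *ᵥ U i) a) = ∑ a, M a a := by
    intro M
    have h1 : ∀ i, (∑ a, U i a * (M *ᵥ U i) a) = ∑ a, ∑ b, M a b * (U i a * U i b) := by
      intro i
      refine Finset.sum_congr rfl fun a _ => ?_
      rw [Matrix.mulVec, dotProduct, Finset.mul_sum]
      exact Finset.sum_congr rfl fun b _ => by ring
    rw [Finset.sum_congr rfl fun i _ => h1 i]
    exact hdelta (fun a b => M a b)
  -- Parseval
  have hparseval : ∀ w : V → ℝ, (∑ i, (∑ a, w a * U i a)^2) = ∑ a, w a * w a := by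
    intro w
    have h1 : ∀ i, (∑ a, w a * U i a)^2 = ∑ a, ∑ b, (w a * w b) * (U i a * U i b) := by
      intro i
      rw [sq, Finset.sum_mul_sum]
      exact Finset.sum_congr rfl fun a _ => Finset.sum_congr rfl fun b _ => by ring
    rw [Finset.sum_congr rfl fun i _ => h1 i, hdelta]
  -- the matrix applied to a vector
  have hQapp : ∀ (x : V → ℝ) a,
      ((signlessLap G) *ᵥ x) a = (G.degree a : ℝ) * x a + ∑ b ∈ G.neighborFinset a, x b := by
    intro x a
    rw [signlessLap, Matrix.add_mulVec]
    simp only [Pi.add_apply, SimpleGraph.degMatrix, Matrix.mulVec_diagonal,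
      SimpleGraph.adjMatrix_mulVec_apply]
    congr!
  -- quadratic form identity
  have hFq2 : ∀ x : V → ℝ, 2 * (∑ a, x a * ((signlessLap G) *ᵥ x) a)
      = ∑ a, ∑ b, (if G.Adj a b then (x a + x b)^2 else 0) := by
    intro x
    have hL : (∑ a, x a * ((signlessLap G) *ᵥ x) a)
        = (∑ a, (G.degree a : ℝ) * (x a * x a)) + ∑ a, ∑ b ∈ G.neighborFinset a, x a * x b := by
      rw [← Finset.sum_add_distrib]
      refine Finset.sum_congr rfl fun a _ => ?_
      rw [hQapp, mul_add, Finset.mul_sum]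
      ring_nf
    have hR : ∀ a, (∑ b, (if G.Adj a b then (x a + x b)^2 else 0))
        = ∑ b ∈ G.neighborFinset a, (x a * x a + 2 * (x a * x b) + x b * x b) := by
      intro a
      rw [SimpleGraph.neighborFinset_eq_filter, Finset.sum_filter]
      exact Finset.sum_congr rfl fun b _ => by split <;> ring_nf
    have hswap : (∑ a, ∑ b ∈ G.neighborFinset a, x b * x b)
        = ∑ a, (G.degree a : ℝ) * (x a * x a) := by
      have e1 : ∀ a, (∑ b ∈ G.neighborFinset a, x b * x b)
          = ∑ b, (if G.Adj a b then x b * x b else 0) := by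
        intro a
        rw [SimpleGraph.neighborFinset_eq_filter, Finset.sum_filter]
      rw [Finset.sum_congr rfl fun a _ => e1 a, Finset.sum_comm]
      refine Finset.sum_congr rfl fun b _ => ?_
      have e2 : ∀ a, (if G.Adj a b then x b * x b else 0) = (if G.Adj b a then x b * x b else 0) := by
        intro a
        by_cases hab : G.Adj a b
        · rw [if_pos hab, if_pos hab.symm]
        · rw [if_neg hab, if_neg fun h => hab h.symm]
      rw [Finset.sum_congr rfl fun a _ => e2 a, ← Finset.sum_filter,
        ← SimpleGraph.neighborFinset_eq_filter, Finset.sum_const,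
        SimpleGraph.card_neighborFinset_eq_degree]
      simp [nsmul_eq_mul]
    have hconst : ∀ a, (∑ b ∈ G.neighborFinset a, x a * x a) = (G.degree a : ℝ) * (x a * x a) := by
      intro a
      rw [Finset.sum_const, SimpleGraph.card_neighborFinset_eq_degree]
      simp [nsmul_eq_mul]
    have hdist : (∑ a, ∑ b ∈ G.neighborFinset a, (x a * x a + 2 * (x a * x b) + x b * x b))
        = (∑ a, ∑ b ∈ G.neighborFinset a, x a * x a)
          + 2 * (∑ a, ∑ b ∈ G.neighborFinset a, x a * x b)
          + (∑ a, ∑ b ∈ G.neighborFinset a, x b * x b) := by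
      rw [Finset.mul_sum, ← Finset.sum_add_distrib, ← Finset.sum_add_distrib]
      refine Finset.sum_congr rfl fun a _ => ?_
      rw [Finset.mul_sum, ← Finset.sum_add_distrib, ← Finset.sum_add_distrib]
    rw [Finset.sum_congr rfl fun a (_ : a ∈ Finset.univ) => hR a, hdist,
      Finset.sum_congr rfl fun a (_ : a ∈ Finset.univ) => hconst a, hswap, hL]
    ring
  -- lower bound for the quadratic form: the star part
  have hFq : ∀ x : V → ℝ,
      (∑ b ∈ N, (x c + x b)^2) ≤ ∑ a, x a * ((signlessLap G) *ᵥ x) a := by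
    intro x
    set g : V → V → ℝ := fun a b => if G.Adj a b then (x a + x b)^2 else 0 with hg
    have hgnn : ∀ a b, 0 ≤ g a b := by
      intro a b; rw [hg]; dsimp only; split
      · exact sq_nonneg _
      · exact le_refl 0
    have hgsymm : ∀ a b, g a b = g b a := by
      intro a b; rw [hg]; dsimp only
      by_cases hab : G.Adj a b
      · rw [if_pos hab, if_pos hab.symm]; ring
      · rw [if_neg hab, if_neg fun h => hab h.symm]
    have hS : ∀ v, (∑ b, g v b) = ∑ b ∈ G.neighborFinset v, (x v + x b)^2 := by
      intro v; rw [hg]; dsimp only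
      rw [SimpleGraph.neighborFinset_eq_filter, Finset.sum_filter]
    have h3 : (∑ a ∈ Finset.univ.erase c, g a c) ≤ ∑ a ∈ Finset.univ.erase c, ∑ b, g a b :=
      Finset.sum_le_sum fun a _ => Finset.single_le_sum (fun b _ => hgnn a b) (Finset.mem_univ c)
    have h4 : (∑ a ∈ Finset.univ.erase c, g a c) = ∑ b ∈ N, (x c + x b)^2 := by
      have h5 : (∑ a ∈ Finset.univ.erase c, g a c) = ∑ a ∈ Finset.univ.erase c, g c a :=
        Finset.sum_congr rfl fun a _ => hgsymm a c
      have h7 : g c c = 0 := by rw [hg]; simp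
      have h6 : (∑ a ∈ Finset.univ.erase c, g c a) + g c c = ∑ a, g c a :=
        Finset.sum_erase_add _ _ (Finset.mem_univ c)
      rw [h7, add_zero] at h6
      rw [h5, h6, hS c, hN]
    have hT : 2 * (∑ b ∈ N, (x c + x b)^2) ≤ ∑ a, ∑ b, g a b := by
      rw [← Finset.sum_erase_add Finset.univ _ (Finset.mem_univ c)]
      have h10 : (∑ b, g c b) = ∑ b ∈ N, (x c + x b)^2 := by rw [hS c, hN]
      rw [h10]
      linarith [h4 ▸ h3]
    have h8 := hFq2 x
    have h9 : (∑ a, ∑ b, (if G.Adj a b then (x a + x b)^2 else 0)) = ∑ a, ∑ b, g a b := rfl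
    linarith [hT, h8, h9]
  -- the pointwise star bound
  have hexpand : ∀ x : V → ℝ, (∑ b ∈ N, (x c + x b)^2)
      = (Δ:ℝ) * (x c * x c) + 2 * x c * (∑ b ∈ N, x b) + ∑ b ∈ N, x b * x b := by
    intro x
    have e : ∀ b, (x c + x b)^2 = x c * x c + 2 * x c * x b + x b * x b := fun b => by ring
    rw [Finset.sum_congr rfl fun b _ => e b, Finset.sum_add_distrib, Finset.sum_add_distrib,
      Finset.sum_const, ← Finset.mul_sum, hNcard]
    simp [nsmul_eq_mul]
  have hsubset : ∀ x : V → ℝ, x c * x c + (∑ b ∈ N, x b * x b) ≤ ∑ a, x a * x a := by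
    intro x
    have h1 : (∑ a ∈ insert c N, x a * x a) ≤ ∑ a, x a * x a :=
      Finset.sum_le_sum_of_subset_of_nonneg (Finset.subset_univ _)
        (fun a _ _ => mul_self_nonneg (x a))
    rwa [Finset.sum_insert hcN] at h1
  have hpoint : ∀ x : V → ℝ, ((Δ:ℝ) + 1) * (∑ b ∈ N, (x c + x b)^2)
      ≤ ((Δ:ℝ) + 1) * (∑ a, x a * x a) + ((Δ:ℝ) * x c + ∑ b ∈ N, x b)^2 := by
    intro x
    have h1 := hexpand x
    have h2 := hsubset x
    nlinarith [sq_nonneg (x c - ∑ b ∈ N, x b), h1, h2, hΔ1]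
  -- the test vector for Parseval
  set vv : V → ℝ := fun a => (if a = c then (Δ:ℝ) else 0) + (if a ∈ N then 1 else 0) with hvv
  have hvvdot : ∀ x : V → ℝ, (∑ a, vv a * x a) = (Δ:ℝ) * x c + ∑ b ∈ N, x b := by
    intro x
    have e : ∀ a, vv a * x a
        = (if a = c then (Δ:ℝ) * x a else 0) + (if a ∈ N then x a else 0) := by
      intro a; rw [hvv]; dsimp only; split <;> split <;> ring
    rw [Finset.sum_congr rfl fun a _ => e a, Finset.sum_add_distrib,
      Finset.sum_ite_eq' Finset.univ c (fun a => (Δ:ℝ) * x a),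
      Finset.sum_ite_mem, Finset.univ_inter]
    simp
  have hvvnorm : (∑ a, vv a * vv a) = (Δ:ℝ)^2 + Δ := by
    rw [hvvdot vv]
    have h1 : vv c = (Δ:ℝ) := by rw [hvv]; simp [hcN]
    have h2 : ∀ b ∈ N, vv b = 1 := by
      intro b hb
      have hbc : b ≠ c := by rintro rfl; exact hcN hb
      rw [hvv]; simp [hbc, hb]
    rw [h1, Finset.sum_congr rfl h2, Finset.sum_const, hNcard]
    simp [sq]
  -- the subset of indices realizing sumKLargest
  obtain ⟨t, htc, hts⟩ := sumKLargest_eq_sum_subset ev k hkn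
  have hSplus : Splus G k = ∑ i ∈ t, ev i := hts
  -- the star quadratic form of each eigenvector
  set S : V → ℝ := fun i => ∑ b ∈ N, (U i c + U i b)^2 with hSdef
  -- sum over t of S is at most k + Δ
  have hSsum : (∑ i ∈ t, S i) ≤ (k:ℝ) + Δ := by
    have hd : ∀ i, ((Δ:ℝ) + 1) * S i ≤ ((Δ:ℝ) + 1) + ((Δ:ℝ) * U i c + ∑ b ∈ N, U i b)^2 := by
      intro i
      have h1 := hpoint (U i)
      have h2 := horth i i
      rw [if_pos rfl] at h2
      rw [h2, mul_one] at h1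
      exact h1
    have hbessel : (∑ i ∈ t, ((Δ:ℝ) * U i c + ∑ b ∈ N, U i b)^2) ≤ (Δ:ℝ)^2 + Δ := by
      have h1 : (∑ i ∈ t, ((Δ:ℝ) * U i c + ∑ b ∈ N, U i b)^2)
          ≤ ∑ i, ((Δ:ℝ) * U i c + ∑ b ∈ N, U i b)^2 :=
        Finset.sum_le_sum_of_subset_of_nonneg (Finset.subset_univ _)
          (fun i _ _ => sq_nonneg _)
      have h2 : (∑ i, ((Δ:ℝ) * U i c + ∑ b ∈ N, U i b)^2) = (Δ:ℝ)^2 + Δ := by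
        rw [← hvvnorm, ← hparseval vv]
        exact Finset.sum_congr rfl fun i _ => by rw [hvvdot (U i)]
      linarith
    have h3 : ((Δ:ℝ) + 1) * (∑ i ∈ t, S i) ≤ ((Δ:ℝ) + 1) * ((k:ℝ) + Δ) := by
      calc ((Δ:ℝ) + 1) * (∑ i ∈ t, S i) = ∑ i ∈ t, ((Δ:ℝ) + 1) * S i := Finset.mul_sum _ _ _
        _ ≤ ∑ i ∈ t, (((Δ:ℝ) + 1) + ((Δ:ℝ) * U i c + ∑ b ∈ N, U i b)^2) :=
            Finset.sum_le_sum fun i _ => hd i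
        _ = t.card * ((Δ:ℝ) + 1) + ∑ i ∈ t, ((Δ:ℝ) * U i c + ∑ b ∈ N, U i b)^2 := by
            rw [Finset.sum_add_distrib, Finset.sum_const, nsmul_eq_mul]
        _ ≤ k * ((Δ:ℝ) + 1) + ((Δ:ℝ)^2 + Δ) := by rw [htc]; linarith [hbessel]
        _ = ((Δ:ℝ) + 1) * ((k:ℝ) + Δ) := by ring
    have hpos : (0:ℝ) < (Δ:ℝ) + 1 := by linarith
    exact le_of_mul_le_mul_left h3 hpos
  -- eigenvalue minus star form is nonnegative
  have hRnn : ∀ i, 0 ≤ ev i - S i := by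
    intro i
    have h1 := hFq (U i)
    rw [← heig i] at h1
    rw [hSdef]
    dsimp only
    linarith
  -- sum over t of the rest
  have hRsum : (∑ i ∈ t, (ev i - S i)) ≤ ∑ i, (ev i - S i) :=
    Finset.sum_le_sum_of_subset_of_nonneg (Finset.subset_univ _) (fun i _ _ => hRnn i)
  -- total trace
  have htr : (∑ i, ev i) = ∑ a, (G.degree a : ℝ) := by
    rw [Finset.sum_congr rfl fun i (_ : i ∈ Finset.univ) => heig i, htrace]
    refine Finset.sum_congr rfl fun a _ => ?_
    rw [signlessLap]
    simp only [Matrix.add_apply, SimpleGraph.degMatrix, Matrix.diagonal_apply,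
      SimpleGraph.adjMatrix_apply]
    rw [if_neg (G.irrefl), add_zero]
    all_goals simp only [eq_self_iff_true, if_true]
    all_goals congr!
  -- total star sum
  have hstot : (∑ i, S i) = 2 * (Δ:ℝ) := by
    rw [hSdef]
    dsimp only
    rw [Finset.sum_comm]
    have h1 : ∀ b ∈ N, (∑ i, (U i c + U i b)^2) = 2 := by
      intro b hb
      have hbc : c ≠ b := by rintro rfl; exact hcN hb
      have e : ∀ i : V, (U i c + U i b)^2
          = U i c * U i c + (2 * (U i c * U i b) + U i b * U i b) := fun i => by ring
      rw [Finset.sum_congr rfl fun i _ => e i, Finset.sum_add_distrib, Finset.sum_add_distrib,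
        ← Finset.mul_sum, hcol c c, hcol c b, hcol b b]
      norm_num [hbc]
    calc (∑ b ∈ N, ∑ i, (U i c + U i b)^2) = ∑ b ∈ N, (2:ℝ) := Finset.sum_congr rfl h1
      _ = 2 * (Δ:ℝ) := by rw [Finset.sum_const, hNcard, nsmul_eq_mul]; ring
  -- edge count
  have hedge : (∑ a, (G.degree a : ℝ)) = 2 * (numEdges G : ℝ) := by
    have h1 : (∑ a, G.degree a) = 2 * G.edgeFinset.card := G.sum_degrees_eq_twice_card_edges
    have h2 : numEdges G = G.edgeFinset.card := by
      rw [numEdges, Set.ncard_eq_toFinset_card']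
      congr 1
    rw [h2]
    exact_mod_cast congrArg (Nat.cast : ℕ → ℝ) h1
  -- put everything together
  rw [hSplus]
  have hsplit : (∑ i ∈ t, ev i) = (∑ i ∈ t, S i) + ∑ i ∈ t, (ev i - S i) := by
    rw [← Finset.sum_add_distrib]
    exact Finset.sum_congr rfl fun i _ => by ring
  have htot : (∑ i, (ev i - S i)) = 2 * (numEdges G : ℝ) - 2 * Δ := by
    rw [Finset.sum_sub_distrib, htr, hstot, hedge]
  rw [hsplit]
  rw [htot] at hRsum
  linarith [hSsum, hRsum]
end

section
/- Let G be a connected graph with n vertices and let k be an integer with (3n−4+√(8n²e(G)−8n³+9n²−8n+16))/(2n) ≤ k ≤ n. Then S⁺_k(G) ≤ e(G) + k(k+1)/2. -/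
open Matrix Polynomial

lemma sumKLargest_eq_finset_sum {n : ℕ} (v : Fin n → ℝ) (k : ℕ) :
    ∃ S : Finset (Fin n), S.card ≤ k ∧ sumKLargest v k = ∑ i ∈ S, v i := by
  classical
  set L := ((Finset.univ.val.map v).toList.mergeSort (fun a b => decide (b ≤ a))) with hL
  have hperm : List.Perm L (Finset.univ.val.map v).toList := List.mergeSort_perm _ _
  have hperm2 : List.Perm (Finset.univ.val.map v).toList (List.map v (Finset.univ : Finset (Fin n)).toList) := by
    rw [← Multiset.coe_eq_coe, Multiset.coe_toList, ← Multiset.map_coe, Finset.toList,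
      Multiset.coe_toList]
  have hsub : List.Subperm (L.take k) (List.map v (Finset.univ : Finset (Fin n)).toList) :=
    ((L.take_sublist k).subperm).trans (hperm.trans hperm2).subperm
  obtain ⟨l', hl'perm, hl'sub⟩ := hsub
  obtain ⟨idx, hidxsub, rfl⟩ := List.sublist_map_iff.mp hl'sub
  have hnodup : idx.Nodup := hidxsub.nodup (Finset.nodup_toList _)
  refine ⟨idx.toFinset, ?_, ?_⟩
  · have h1 : idx.toFinset.card = idx.length := List.toFinset_card_of_nodup hnodup
    have h2 : (List.map v idx).length = (L.take k).length := hl'perm.length_eq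
    simp only [List.length_map] at h2
    have := List.length_take (i := k) (l := L)
    omega
  · have : sumKLargest v k = (L.take k).sum := rfl
    rw [this, ← hl'perm.sum_eq, List.sum_toFinset v hnodup]


open Finset in
lemma signlessLap_quadForm {n : ℕ} (G : SimpleGraph (Fin n)) [DecidableRel G.Adj]
    (x : Fin n → ℝ) :
    x ⬝ᵥ (signlessLap G *ᵥ x) =
      (∑ i, ∑ j, if G.Adj i j then (x i + x j)^2 else 0) / 2 := by
  have hQ : signlessLap G = G.degMatrix ℝ + G.adjMatrix ℝ := by
    unfold signlessLap; congr!
  rw [hQ]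
  simp_rw [add_mulVec, dotProduct_add, SimpleGraph.dotProduct_mulVec_degMatrix,
    SimpleGraph.dotProduct_mulVec_adjMatrix, SimpleGraph.degree_eq_sum_if_adj, sum_mul, ite_mul,
    one_mul, zero_mul, ← Finset.sum_add_distrib, ite_add_ite, add_zero]
  rw [← add_self_div_two (∑ i : Fin n, ∑ j : Fin n, _)]
  conv_lhs => enter [1,2,2,i,2,j]; rw [if_congr (G.adj_comm i j) rfl rfl]
  conv_lhs => enter [1,2]; rw [Finset.sum_comm]
  simp_rw [← Finset.sum_add_distrib, ite_add_ite]
  congr 2 with i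
  congr 2 with j
  ring_nf

lemma norm_one_sum {n : ℕ} (u : OrthonormalBasis (Fin n) ℝ (EuclideanSpace ℝ (Fin n)))
    (t : Fin n) : ∑ i, u t i * u t i = 1 := by
  have hn := u.orthonormal.1 t
  have h : (inner ℝ (u t) (u t) : ℝ) = 1 := by
    rw [real_inner_self_eq_norm_sq, hn]; norm_num
  rw [← h, PiLp.inner_apply]
  simp [sq]

open Finset in
lemma eigen_eq_quad {n : ℕ} (G : SimpleGraph (Fin n)) [DecidableRel G.Adj] (t : Fin n) :
    (signlessLap_isHermitian G).eigenvalues t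
      = (∑ i, ∑ j, if G.Adj i j then
          ((signlessLap_isHermitian G).eigenvectorBasis t i
            + (signlessLap_isHermitian G).eigenvectorBasis t j)^2 else 0) / 2 := by
  have hmv := (signlessLap_isHermitian G).mulVec_eigenvectorBasis t
  have hdot : ⇑((signlessLap_isHermitian G).eigenvectorBasis t) ⬝ᵥ
      (signlessLap G *ᵥ ⇑((signlessLap_isHermitian G).eigenvectorBasis t))
      = (signlessLap_isHermitian G).eigenvalues t := by
    rw [hmv, dotProduct_smul, smul_eq_mul]
    have h1 : ⇑((signlessLap_isHermitian G).eigenvectorBasis t) ⬝ᵥ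
        ⇑((signlessLap_isHermitian G).eigenvectorBasis t) = 1 := by
      simpa [dotProduct] using norm_one_sum (signlessLap_isHermitian G).eigenvectorBasis t
    rw [h1, mul_one]
  rw [← hdot, signlessLap_quadForm]

open Finset in
lemma count_adj {n : ℕ} (G : SimpleGraph (Fin n)) [DecidableRel G.Adj] :
    (∑ i : Fin n, ∑ j : Fin n, if G.Adj i j then (2:ℝ) else 0)
      = 4 * (G.edgeSet.ncard : ℝ) := by
  have h1 : ∀ i : Fin n, (∑ j, if G.Adj i j then (2:ℝ) else 0) = 2 * (G.degree i : ℝ) := by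
    intro i
    have hd := SimpleGraph.degree_eq_sum_if_adj (R := ℝ) (G := G) i
    rw [hd, Finset.mul_sum]
    exact Finset.sum_congr rfl fun j _ => by split <;> norm_num
  simp_rw [h1]
  rw [← Finset.mul_sum]
  have h2 : ∑ i : Fin n, (G.degree i : ℝ) = ((∑ i, G.degree i : ℕ) : ℝ) := by push_cast; rfl
  rw [h2, SimpleGraph.sum_degrees_eq_twice_card_edges]
  have h3 : G.edgeSet.ncard = G.edgeFinset.card := by
    rw [← SimpleGraph.coe_edgeFinset, Set.ncard_coe_finset]
  rw [h3]
  push_cast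
  ring


lemma bessel_sum {n : ℕ} (u : OrthonormalBasis (Fin n) ℝ (EuclideanSpace ℝ (Fin n)))
    (S : Finset (Fin n)) (w : Fin n → ℝ) :
    ∑ t ∈ S, (∑ i, w i * u t i)^2 ≤ ∑ i, (w i)^2 := by
  have hb := u.orthonormal.sum_inner_products_le
    (x := (WithLp.toLp 2 w : EuclideanSpace ℝ (Fin n))) (s := S)
  have h1 : ∀ t : Fin n,
      (inner ℝ (u t) (WithLp.toLp 2 w : EuclideanSpace ℝ (Fin n)) : ℝ) = ∑ i, w i * u t i := by
    intro t
    rw [real_inner_comm]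
    simp [PiLp.inner_apply]
    exact Finset.sum_congr rfl fun i _ => mul_comm _ _
  have h2 : ‖(WithLp.toLp 2 w : EuclideanSpace ℝ (Fin n))‖^2 = ∑ i, (w i)^2 := by
    rw [← real_inner_self_eq_norm_sq, PiLp.inner_apply]
    simp [sq]
  rw [h2] at hb
  refine le_trans (le_of_eq ?_) hb
  refine Finset.sum_congr rfl fun t _ => ?_
  rw [h1 t, Real.norm_eq_abs, sq_abs]



lemma star_core_real (a T P y : ℝ) (ha1 : 1 ≤ a) (hCS : T^2 ≤ a * P) :
    P + 2 * y * T + a * y^2 ≤ 2*y^2 + 2*P + ((a - 1)/(a^2 + a)) * (a * y + T)^2 := by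
  have hpos : (0:ℝ) < a^2 + a := by nlinarith
  rw [← sub_nonneg]
  have key : 2*y^2 + 2*P + ((a-1)/(a^2+a)) * (a*y+T)^2 - (P + 2*y*T + a*y^2)
      = ((a^2+a) * (2*y^2 + P - 2*y*T - a*y^2) + (a-1)*(a*y+T)^2) / (a^2+a) := by
    field_simp
    ring
  rw [key]
  apply div_nonneg _ hpos.le
  have h1 : (a+1) * T^2 ≤ (a^2+a) * P := by nlinarith
  nlinarith [h1, mul_nonneg (by linarith : (0:ℝ) ≤ a) (sq_nonneg (y - T))]

lemma star_ineq {n : ℕ} (L : Finset (Fin n)) (c : Fin n) (hL : L.Nonempty) (x : Fin n → ℝ) :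
    ∑ v ∈ L, (x v + x c)^2 ≤ 2*(x c)^2 + 2*(∑ v ∈ L, (x v)^2)
      + (((L.card : ℝ) - 1)/((L.card:ℝ)^2 + L.card)) * ((L.card : ℝ) * x c + ∑ v ∈ L, x v)^2 := by
  have h0 : 1 ≤ L.card := hL.card_pos
  have ha1 : (1:ℝ) ≤ (L.card:ℝ) := by exact_mod_cast h0
  have hCS : (∑ v ∈ L, x v)^2 ≤ (L.card:ℝ) * ∑ v ∈ L, (x v)^2 := by
    exact_mod_cast sq_sum_le_card_mul_sum_sq (s := L) (f := x)
  have e1 : ∑ v ∈ L, (x v + x c)^2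
      = (∑ v ∈ L, (x v)^2) + 2 * x c * (∑ v ∈ L, x v) + (L.card:ℝ) * (x c)^2 := by
    rw [Finset.mul_sum]
    rw [show ((L.card:ℝ) * (x c)^2) = ∑ _v ∈ L, (x c)^2 by
      rw [Finset.sum_const, nsmul_eq_mul]]
    rw [← Finset.sum_add_distrib, ← Finset.sum_add_distrib]
    exact Finset.sum_congr rfl fun v _ => by ring
  rw [e1]
  exact star_core_real _ _ _ _ ha1 hCS



def IsStarPart {n : ℕ} (G : SimpleGraph (Fin n)) (p : Fin n → Fin n) : Prop :=
  (∀ v, p (p v) = p v) ∧ (∀ v, p v ≠ v → G.Adj v (p v)) ∧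
    (∀ c, p c = c → ∃ v, p v = c ∧ v ≠ c)

lemma exists_adj_of_connected {n : ℕ} (G : SimpleGraph (Fin n)) (hG : G.Connected)
    (hn : 2 ≤ n) (v : Fin n) : ∃ w, G.Adj v w := by
  have hcard : 1 < Fintype.card (Fin n) := by rw [Fintype.card_fin]; omega
  obtain ⟨u, hu⟩ := Fintype.exists_ne_of_one_lt_card hcard v
  obtain ⟨W⟩ := hG.preconnected v u
  have hnil : ¬ W.Nil := SimpleGraph.Walk.not_nil_of_ne (Ne.symm hu)
  exact ⟨W.getVert 1, W.adj_snd hnil⟩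

lemma exists_isStarPart {n : ℕ} (G : SimpleGraph (Fin n)) (hG : G.Connected) (hn : 2 ≤ n) :
    ∃ p, IsStarPart G p := by
  classical
  let bad : (Fin n → Fin n) → Finset (Fin n) := fun p =>
    Finset.univ.filter (fun c => p c = c ∧ ∀ v, p v = c → v = c)
  have hmem : ∀ p c, c ∈ bad p ↔ (p c = c ∧ ∀ v, p v = c → v = c) := by
    intro p c; simp [bad]
  have hfin : ∀ p : Fin n → Fin n, (∀ v, p (p v) = p v) → (∀ v, p v ≠ v → G.Adj v (p v)) →
      bad p = ∅ → ∃ q, IsStarPart G q := by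
    intro p h1 h2 hbe
    refine ⟨p, h1, h2, fun c hc => ?_⟩
    have hnmem : c ∉ bad p := by simp [hbe]
    rw [hmem] at hnmem
    have hB : ¬ (∀ v, p v = c → v = c) := fun hB => hnmem ⟨hc, hB⟩
    push_neg at hB
    obtain ⟨v, hv1, hv2⟩ := hB
    exact ⟨v, hv1, hv2⟩
  suffices h : ∀ (N : ℕ) (p : Fin n → Fin n), (∀ v, p (p v) = p v) →
      (∀ v, p v ≠ v → G.Adj v (p v)) → (bad p).card ≤ N → ∃ q, IsStarPart G q by
    exact h ((bad id).card) id (fun v => rfl) (fun v hv => absurd rfl hv) le_rfl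
  intro N
  induction N with
  | zero =>
    intro p h1 h2 hcard
    exact hfin p h1 h2 (Finset.card_eq_zero.mp (Nat.le_zero.mp hcard))
  | succ N ih =>
    intro p h1 h2 hcard
    rcases (bad p).eq_empty_or_nonempty with hbe | ⟨c, hcmem⟩
    · exact hfin p h1 h2 hbe
    obtain ⟨hc, hcl⟩ := (hmem p c).mp hcmem
    obtain ⟨w, hadj⟩ := exists_adj_of_connected G hG hn c
    have hcw : c ≠ w := G.ne_of_adj hadj
    have hnotc : ∀ v, v ≠ c → p v ≠ c := fun v hv h => hv (hcl v h)
    by_cases hcase : p w = w ∨ ∃ v, p v = p w ∧ v ≠ w ∧ v ≠ p w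
    · -- two-point update
      set p' : Fin n → Fin n := fun x => if x = c ∨ x = w then w else p x with hp'
      have hp'c : p' c = w := by simp [hp']
      have hp'w : p' w = w := by simp [hp']
      have hp'other : ∀ x, x ≠ c → x ≠ w → p' x = p x := by
        intro x h h'; simp [hp', h, h']
      have hkey : ∀ x, x ≠ c → x ≠ w → p' (p x) = p x := by
        intro x hxc hxw
        by_cases hpw : p x = w
        · rw [hpw, hp'w]
        · rw [hp'other _ (hnotc x hxc) hpw, h1]
      have h1' : ∀ v, p' (p' v) = p' v := by
        intro v
        by_cases hv : v = c ∨ v = w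
        · have hvw : p' v = w := by
            rcases hv with rfl | rfl
            · exact hp'c
            · exact hp'w
          rw [hvw, hp'w]
        · push_neg at hv
          rw [hp'other _ hv.1 hv.2, hkey _ hv.1 hv.2]
      have h2' : ∀ v, p' v ≠ v → G.Adj v (p' v) := by
        intro v hv
        by_cases hvc : v = c
        · subst hvc; rw [hp'c]; exact hadj
        · by_cases hvw : v = w
          · rw [hvw, hp'w] at hv; exact absurd rfl hv
          · rw [hp'other _ hvc hvw] at hv ⊢; exact h2 v hv
      have hsub : bad p' ⊆ (bad p).erase c := by
        intro b hb
        obtain ⟨hb1, hb2⟩ := (hmem p' b).mp hb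
        have hbc : b ≠ c := by
          intro h; subst h; rw [hp'c] at hb1; exact hcw hb1.symm
        have hbw : b ≠ w := by
          intro h; subst h
          exact hcw (hb2 c hp'c)
        rw [Finset.mem_erase]
        refine ⟨hbc, (hmem p b).mpr ⟨?_, ?_⟩⟩
        · rw [← hp'other b hbc hbw]; exact hb1
        · intro v hv
          by_cases hvc : v = c
          · rw [hvc, hc] at hv; exact absurd hv.symm hbc
          · by_cases hvw : v = w
            · rw [hvw] at hv
              rcases hcase with hdw | ⟨v₀, hv₀, hv₀w, hv₀d⟩
              · rw [hdw] at hv; exact absurd hv.symm hbw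
              · exfalso
                have hv₀c : v₀ ≠ c := by
                  intro h; subst h
                  rw [hc] at hv₀
                  exact hcw (hcl w hv₀.symm).symm
                have : p' v₀ = b := by rw [hp'other _ hv₀c hv₀w, hv₀, hv]
                exact hv₀d (by rw [hb2 v₀ this, ← hv])
            · rw [← hp'other _ hvc hvw] at hv
              exact hb2 v hv
      have hcard' : (bad p').card ≤ N := by
        have hs1 := Finset.card_le_card hsub
        have hs2 := Finset.card_erase_of_mem hcmem
        omega
      exact ih p' h1' h2' hcard'
    · push_neg at hcase
      obtain ⟨hdw, hmax⟩ := hcase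
      have hdcen : p (p w) = p w := h1 w
      have hwadj : G.Adj w (p w) := h2 w hdw
      have hdc : p w ≠ c := hnotc w (Ne.symm hcw)
      have hnotw : ∀ x, p x ≠ w := by
        intro x h
        exact hdw (by rw [← h, h1])
      set p' : Fin n → Fin n := fun x => if x = c ∨ x = w ∨ x = p w then w else p x with hp'
      have hp'c : p' c = w := by simp [hp']
      have hp'w : p' w = w := by simp [hp']
      have hp'd : p' (p w) = w := by simp [hp']
      have hp'other : ∀ x, x ≠ c → x ≠ w → x ≠ p w → p' x = p x := by
        intro x h h' h''; simp [hp', h, h', h'']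
      have h1' : ∀ v, p' (p' v) = p' v := by
        intro v
        by_cases hv : v = c ∨ v = w ∨ v = p w
        · have hvw : p' v = w := by
            rcases hv with rfl | rfl | hv
            · exact hp'c
            · exact hp'w
            · rw [hv]; exact hp'd
          rw [hvw, hp'w]
        · push_neg at hv
          obtain ⟨hv1, hv2, hv3⟩ := hv
          rw [hp'other _ hv1 hv2 hv3]
          by_cases hpd : p v = p w
          · exact absurd (hmax v hpd hv2) hv3
          · rw [hp'other _ (hnotc v hv1) (hnotw v) hpd, h1]
      have h2' : ∀ v, p' v ≠ v → G.Adj v (p' v) := by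
        intro v hv
        by_cases hvc : v = c
        · subst hvc; rw [hp'c]; exact hadj
        · by_cases hvw : v = w
          · subst hvw; rw [hp'w] at hv; exact absurd rfl hv
          · by_cases hvd : v = p w
            · rw [hvd, hp'd]
              exact hwadj.symm
            · rw [hp'other _ hvc hvw hvd] at hv ⊢; exact h2 v hv
      have hsub : bad p' ⊆ (bad p).erase c := by
        intro b hb
        obtain ⟨hb1, hb2⟩ := (hmem p' b).mp hb
        have hbc : b ≠ c := by
          intro h; subst h; rw [hp'c] at hb1; exact hcw hb1.symm
        have hbw : b ≠ w := by
          intro h; subst h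
          exact hcw (hb2 c hp'c)
        have hbd : b ≠ p w := by
          intro h
          rw [h, hp'd] at hb1
          exact hdw hb1.symm
        rw [Finset.mem_erase]
        refine ⟨hbc, (hmem p b).mpr ⟨?_, ?_⟩⟩
        · rw [← hp'other b hbc hbw hbd]; exact hb1
        · intro v hv
          by_cases hvc : v = c
          · rw [hvc, hc] at hv; exact absurd hv.symm hbc
          · by_cases hvw : v = w
            · rw [hvw] at hv; exact absurd hv.symm hbd
            · by_cases hvd : v = p w
              · rw [hvd, hdcen] at hv; exact absurd hv.symm hbd
              · rw [← hp'other _ hvc hvw hvd] at hv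
                exact hb2 v hv
      have hcard' : (bad p').card ≤ N := by
        have hs1 := Finset.card_le_card hsub
        have hs2 := Finset.card_erase_of_mem hcmem
        omega
      exact ih p' h1' h2' hcard'


open Finset in
lemma pair_bessel {n : ℕ} (u : OrthonormalBasis (Fin n) ℝ (EuclideanSpace ℝ (Fin n)))
    (S : Finset (Fin n)) {i j : Fin n} (hij : i ≠ j) :
    ∑ t ∈ S, (u t i + u t j)^2 ≤ 2 := by
  classical
  have hb := bessel_sum u S (fun v => (if v = i then 1 else 0) + (if v = j then 1 else 0))
  have h1 : ∀ t : Fin n,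
      (∑ v, ((if v = i then (1:ℝ) else 0) + (if v = j then 1 else 0)) * u t v)
        = u t i + u t j := by
    intro t
    simp only [add_mul, ite_mul, one_mul, zero_mul]
    rw [Finset.sum_add_distrib, Finset.sum_ite_eq' univ i (fun v => u t v),
      Finset.sum_ite_eq' univ j (fun v => u t v)]
    simp
  have h2 : (∑ v, (((if v = i then (1:ℝ) else 0) + (if v = j then 1 else 0)))^2) = 2 := by
    have hpt : ∀ v : Fin n, (((if v = i then (1:ℝ) else 0) + (if v = j then 1 else 0)))^2
        = (if v = i then 1 else 0) + (if v = j then 1 else 0) := by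
      intro v
      by_cases h1 : v = i
      · subst h1
        rw [if_pos rfl, if_neg (fun h => hij h)]
        norm_num
      · by_cases h2 : v = j <;> simp [h1, h2, Ne.symm hij]
    rw [Finset.sum_congr rfl (fun v _ => hpt v), Finset.sum_add_distrib,
      Finset.sum_ite_eq' univ i (fun _ => (1:ℝ)), Finset.sum_ite_eq' univ j (fun _ => (1:ℝ))]
    simp
    norm_num
  rw [h2] at hb
  refine le_trans (le_of_eq (Finset.sum_congr rfl fun t _ => ?_)) hb
  rw [h1 t]

open Finset in
lemma star_bessel {n : ℕ} (u : OrthonormalBasis (Fin n) ℝ (EuclideanSpace ℝ (Fin n)))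
    (S : Finset (Fin n)) (L : Finset (Fin n)) (c : Fin n) (hcL : c ∉ L) (hL : L.Nonempty) :
    ∑ t ∈ S, ∑ v ∈ L, (u t v + u t c)^2
      ≤ 2 * (∑ t ∈ S, ((u t c)^2 + ∑ v ∈ L, (u t v)^2)) + ((L.card : ℝ) - 1) := by
  classical
  set a : ℝ := (L.card : ℝ) with ha
  have ha1 : (1:ℝ) ≤ a := by
    have hcp : 1 ≤ L.card := hL.card_pos
    rw [ha]
    exact_mod_cast hcp
  have hapos : (0:ℝ) < a^2 + a := by nlinarith
  -- Bessel for the star vector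
  have hb := bessel_sum u S (fun v => (if v = c then a else 0) + (if v ∈ L then 1 else 0))
  have h1 : ∀ t : Fin n,
      (∑ v, ((if v = c then a else 0) + (if v ∈ L then 1 else 0)) * u t v)
        = a * u t c + ∑ v ∈ L, u t v := by
    intro t
    simp only [add_mul, ite_mul, one_mul, zero_mul]
    rw [Finset.sum_add_distrib, Finset.sum_ite_eq' univ c (fun v => a * u t v)]
    have : (∑ v : Fin n, if v ∈ L then u t v else 0) = ∑ v ∈ L, u t v := by
      rw [Finset.sum_ite_mem]
      congr 1
      exact Finset.univ_inter L
    rw [this]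
    simp
  have h2 : (∑ v, (((if v = c then a else 0) + (if v ∈ L then 1 else 0)))^2) = a^2 + a := by
    have hpt : ∀ v : Fin n, (((if v = c then a else 0) + (if v ∈ L then 1 else 0)))^2
        = (if v = c then a^2 else 0) + (if v ∈ L then 1 else 0) := by
      intro v
      by_cases h1 : v = c
      · subst h1
        rw [if_neg hcL, if_pos rfl, if_pos rfl]
        ring
      · by_cases h2 : v ∈ L <;> simp [h1, h2]
    rw [Finset.sum_congr rfl (fun v _ => hpt v), Finset.sum_add_distrib,
      Finset.sum_ite_eq' univ c (fun _ => a^2)]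
    have : (∑ v : Fin n, if v ∈ L then (1:ℝ) else 0) = ∑ v ∈ L, (1:ℝ) := by
      rw [Finset.sum_ite_mem]
      congr 1
      exact Finset.univ_inter L
    rw [this]
    simp [ha]
  rw [h2] at hb
  have hBess : ∑ t ∈ S, (a * u t c + ∑ v ∈ L, u t v)^2 ≤ a^2 + a := by
    refine le_trans (le_of_eq (Finset.sum_congr rfl fun t _ => ?_)) hb
    rw [h1 t]
  -- apply the scalar star inequality termwise
  have hterm : ∀ t ∈ S, ∑ v ∈ L, (u t v + u t c)^2
      ≤ (2*(u t c)^2 + 2*(∑ v ∈ L, (u t v)^2))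
        + ((a - 1)/(a^2 + a)) * (a * u t c + ∑ v ∈ L, u t v)^2 := by
    intro t _
    have hsi := star_ineq L c hL (u t)
    rw [ha]
    exact hsi
  calc ∑ t ∈ S, ∑ v ∈ L, (u t v + u t c)^2
      ≤ ∑ t ∈ S, ((2*(u t c)^2 + 2*(∑ v ∈ L, (u t v)^2))
          + ((a - 1)/(a^2 + a)) * (a * u t c + ∑ v ∈ L, u t v)^2) :=
        Finset.sum_le_sum hterm
    _ = (∑ t ∈ S, (2*(u t c)^2 + 2*(∑ v ∈ L, (u t v)^2)))
          + ((a - 1)/(a^2 + a)) * ∑ t ∈ S, (a * u t c + ∑ v ∈ L, u t v)^2 := by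
        rw [Finset.sum_add_distrib, Finset.mul_sum]
    _ ≤ (∑ t ∈ S, (2*(u t c)^2 + 2*(∑ v ∈ L, (u t v)^2)))
          + ((a - 1)/(a^2 + a)) * (a^2 + a) := by
        have hco : (0:ℝ) ≤ (a - 1)/(a^2 + a) := div_nonneg (by linarith) (le_of_lt hapos)
        have := mul_le_mul_of_nonneg_left hBess hco
        linarith
    _ = 2 * (∑ t ∈ S, ((u t c)^2 + ∑ v ∈ L, (u t v)^2)) + (a - 1) := by
        rw [div_mul_cancel₀ _ (ne_of_gt hapos), Finset.mul_sum]
        congr 1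
        exact Finset.sum_congr rfl fun t _ => by ring


open Finset in
lemma adj_sum_split {n : ℕ} (G : SimpleGraph (Fin n)) [DecidableRel G.Adj]
    (p : Fin n → Fin n) (hp : IsStarPart G p) (F : Fin n → Fin n → ℝ) :
    (∑ i, ∑ j, if G.Adj i j then F i j else 0)
      = (∑ i, ∑ j, if G.Adj i j ∧ ¬(p i = j ∧ p i ≠ i) ∧ ¬(p j = i ∧ p j ≠ j) then F i j else 0)
        + ((∑ v ∈ univ.filter (fun v => p v ≠ v), F v (p v))
           + (∑ v ∈ univ.filter (fun v => p v ≠ v), F (p v) v)) := by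
  classical
  obtain ⟨hidem, hadj, -⟩ := hp
  have hpt : ∀ i j : Fin n, (if G.Adj i j then F i j else 0)
      = (if G.Adj i j ∧ ¬(p i = j ∧ p i ≠ i) ∧ ¬(p j = i ∧ p j ≠ j) then F i j else 0)
        + ((if p i = j ∧ p i ≠ i then F i j else 0) + (if p j = i ∧ p j ≠ j then F i j else 0)) := by
    intro i j
    by_cases h1 : p i = j ∧ p i ≠ i
    · have hA : G.Adj i j := h1.1 ▸ hadj i h1.2
      have h2 : ¬(p j = i ∧ p j ≠ j) := by
        rintro ⟨ha, hb⟩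
        apply hb
        rw [← h1.1, hidem]
      simp [h1, h2, hA, G.ne_of_adj hA, (G.ne_of_adj hA).symm]
    · by_cases h2 : p j = i ∧ p j ≠ j
      · have hA : G.Adj i j := (h2.1 ▸ hadj j h2.2).symm
        simp [h1, h2, hA, G.ne_of_adj hA, (G.ne_of_adj hA).symm]
      · by_cases h3 : G.Adj i j <;> simp [h1, h2, h3]
  simp_rw [hpt, Finset.sum_add_distrib]
  congr 1
  congr 1
  · rw [Finset.sum_filter]
    refine Finset.sum_congr rfl fun i _ => ?_
    by_cases hc : p i ≠ i <;> simp [hc, Finset.sum_ite_eq]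
  · rw [Finset.sum_comm, Finset.sum_filter]
    refine Finset.sum_congr rfl fun j _ => ?_
    by_cases hc : p j ≠ j <;> simp [hc, Finset.sum_ite_eq]

open Finset in
lemma eigen_sum_le_trace {n : ℕ} (G : SimpleGraph (Fin n)) [DecidableRel G.Adj]
    (S : Finset (Fin n)) :
    ∑ t ∈ S, (signlessLap_isHermitian G).eigenvalues t ≤ 2 * (G.edgeSet.ncard : ℝ) := by
  classical
  set u := (signlessLap_isHermitian G).eigenvectorBasis with hu
  have step1 : (2:ℝ) * ∑ t ∈ S, (signlessLap_isHermitian G).eigenvalues t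
      = ∑ t ∈ S, ∑ i, ∑ j, (if G.Adj i j then (u t i + u t j)^2 else 0) := by
    rw [Finset.mul_sum]
    refine Finset.sum_congr rfl fun t _ => ?_
    rw [eigen_eq_quad G t]
    ring
  have step2 : ∑ t ∈ S, ∑ i, ∑ j, (if G.Adj i j then (u t i + u t j)^2 else 0)
      ≤ ∑ i, ∑ j, (if G.Adj i j then (2:ℝ) else 0) := by
    rw [Finset.sum_comm]
    refine Finset.sum_le_sum fun i _ => ?_
    rw [Finset.sum_comm]
    refine Finset.sum_le_sum fun j _ => ?_
    by_cases h : G.Adj i j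
    · simp only [h, if_true]
      exact pair_bessel u S (G.ne_of_adj h)
    · simp [h]
  have step3 := count_adj G
  linarith


lemma sum_ite_pull {α : Type*} (S : Finset α) (c : Prop) [Decidable c] (f : α → ℝ) :
    ∑ t ∈ S, (if c then f t else 0) = if c then (∑ t ∈ S, f t) else 0 := by
  split <;> simp

open Finset in
lemma eigen_sum_le_core {n : ℕ} (G : SimpleGraph (Fin n)) [DecidableRel G.Adj]
    (S : Finset (Fin n)) (p : Fin n → Fin n) (hp : IsStarPart G p) :
    ∑ t ∈ S, (signlessLap_isHermitian G).eigenvalues t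
      ≤ 2 * (G.edgeSet.ncard : ℝ) + 2 * S.card - n := by
  classical
  set u := (signlessLap_isHermitian G).eigenvectorBasis with hu
  set Leaves : Finset (Fin n) := univ.filter (fun v => p v ≠ v) with hLv
  set C : Finset (Fin n) := univ.filter (fun v => ¬ p v ≠ v) with hC
  have hmapsto : ∀ v ∈ Leaves, p v ∈ C := by
    intro v _
    simp only [hC, mem_filter, mem_univ, true_and, not_not]
    exact hp.1 v
  have hfibmem : ∀ c v, v ∈ Leaves.filter (fun v => p v = c) ↔ (p v ≠ v ∧ p v = c) := by
    intro c v
    simp [hLv, mem_filter]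
  have hcnotin : ∀ c ∈ C, c ∉ Leaves.filter (fun v => p v = c) := by
    intro c hc hmem
    rw [hfibmem] at hmem
    simp only [hC, mem_filter, mem_univ, true_and, not_not] at hc
    exact hmem.1 (by rw [hc])
  have hfibne : ∀ c ∈ C, (Leaves.filter (fun v => p v = c)).Nonempty := by
    intro c hc
    simp only [hC, mem_filter, mem_univ, true_and, not_not] at hc
    obtain ⟨v, hv1, hv2⟩ := hp.2.2 c hc
    exact ⟨v, (hfibmem c v).mpr ⟨by rw [hv1]; exact Ne.symm hv2, hv1⟩⟩
  -- counting facts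
  have hcount1 : Leaves.card + C.card = n := by
    rw [hLv, hC]
    rw [Finset.card_filter_add_card_filter_not (p := fun v => p v ≠ v)]
    simp
  have hcount2 : Leaves.card = ∑ c ∈ C, (Leaves.filter (fun v => p v = c)).card :=
    Finset.card_eq_sum_card_fiberwise hmapsto
  -- step 1 : doubled eigenvalue sum
  have step1 : (2:ℝ) * ∑ t ∈ S, (signlessLap_isHermitian G).eigenvalues t
      = ∑ t ∈ S, ∑ i, ∑ j, (if G.Adj i j then (u t i + u t j)^2 else 0) := by
    rw [Finset.mul_sum]
    refine Finset.sum_congr rfl fun t _ => ?_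
    rw [eigen_eq_quad G t]
    ring
  -- step 2 : split
  have step2 : ∀ t : Fin n, ∑ i, ∑ j, (if G.Adj i j then (u t i + u t j)^2 else 0)
      = (∑ i, ∑ j, if G.Adj i j ∧ ¬(p i = j ∧ p i ≠ i) ∧ ¬(p j = i ∧ p j ≠ j)
            then (u t i + u t j)^2 else 0)
        + 2 * ∑ v ∈ Leaves, (u t v + u t (p v))^2 := by
    intro t
    rw [adj_sum_split G p hp (fun i j => (u t i + u t j)^2)]
    have heq : ∑ v ∈ Leaves, (u t (p v) + u t v)^2 = ∑ v ∈ Leaves, (u t v + u t (p v))^2 :=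
      Finset.sum_congr rfl fun v _ => by ring
    rw [← hLv, heq]
    ring
  -- rest bound
  have step3 : ∑ t ∈ S, (∑ i, ∑ j, if G.Adj i j ∧ ¬(p i = j ∧ p i ≠ i) ∧ ¬(p j = i ∧ p j ≠ j)
        then (u t i + u t j)^2 else 0)
      ≤ ∑ i, ∑ j, (if G.Adj i j ∧ ¬(p i = j ∧ p i ≠ i) ∧ ¬(p j = i ∧ p j ≠ j)
        then (2:ℝ) else 0) := by
    rw [Finset.sum_comm]
    refine Finset.sum_le_sum fun i _ => ?_
    rw [Finset.sum_comm]
    refine Finset.sum_le_sum fun j _ => ?_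
    rw [sum_ite_pull]
    split
    · next h => exact pair_bessel u S (G.ne_of_adj h.1)
    · exact le_refl 0
  -- rest count
  have step4 : (∑ i, ∑ j, (if G.Adj i j ∧ ¬(p i = j ∧ p i ≠ i) ∧ ¬(p j = i ∧ p j ≠ j)
        then (2:ℝ) else 0))
      = 4 * (G.edgeSet.ncard : ℝ) - 4 * Leaves.card := by
    have := adj_sum_split G p hp (fun _ _ => (2:ℝ))
    rw [count_adj G, ← hLv] at this
    have hconst : ∑ _v ∈ Leaves, (2:ℝ) = 2 * Leaves.card := by
      rw [Finset.sum_const, nsmul_eq_mul]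
      ring
    rw [hconst] at this
    linarith
  -- star bound
  have step5 : ∑ t ∈ S, ∑ v ∈ Leaves, (u t v + u t (p v))^2
      ≤ 2 * S.card + ((Leaves.card : ℝ) - C.card) := by
    have hfibt : ∀ t : Fin n, ∑ v ∈ Leaves, (u t v + u t (p v))^2
        = ∑ c ∈ C, ∑ v ∈ Leaves.filter (fun v => p v = c), (u t v + u t c)^2 := by
      intro t
      rw [← Finset.sum_fiberwise_of_maps_to hmapsto (fun v => (u t v + u t (p v))^2)]
      refine Finset.sum_congr rfl fun c _ => Finset.sum_congr rfl fun v hv => ?_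
      rw [((hfibmem c v).mp hv).2]
    calc ∑ t ∈ S, ∑ v ∈ Leaves, (u t v + u t (p v))^2
        = ∑ t ∈ S, ∑ c ∈ C, ∑ v ∈ Leaves.filter (fun v => p v = c), (u t v + u t c)^2 :=
          Finset.sum_congr rfl fun t _ => hfibt t
      _ = ∑ c ∈ C, ∑ t ∈ S, ∑ v ∈ Leaves.filter (fun v => p v = c), (u t v + u t c)^2 :=
          Finset.sum_comm
      _ ≤ ∑ c ∈ C, (2 * (∑ t ∈ S, ((u t c)^2 + ∑ v ∈ Leaves.filter (fun v => p v = c), (u t v)^2))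
            + (((Leaves.filter (fun v => p v = c)).card : ℝ) - 1)) := by
          refine Finset.sum_le_sum fun c hc => ?_
          exact star_bessel u S _ c (hcnotin c hc) (hfibne c hc)
      _ = 2 * (∑ c ∈ C, ∑ t ∈ S, ((u t c)^2 + ∑ v ∈ Leaves.filter (fun v => p v = c), (u t v)^2))
            + ((Leaves.card : ℝ) - C.card) := by
          rw [Finset.sum_add_distrib, ← Finset.mul_sum, Finset.sum_sub_distrib]
          congr 2
          · rw [hcount2]
            push_cast
            rfl
          · simp
      _ ≤ 2 * S.card + ((Leaves.card : ℝ) - C.card) := by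
          have hinner : ∑ c ∈ C, ∑ t ∈ S, ((u t c)^2 + ∑ v ∈ Leaves.filter (fun v => p v = c), (u t v)^2)
              = ∑ t ∈ S, (1:ℝ) := by
            rw [Finset.sum_comm]
            refine Finset.sum_congr rfl fun t _ => ?_
            rw [Finset.sum_add_distrib]
            have h1 : ∑ c ∈ C, ∑ v ∈ Leaves.filter (fun v => p v = c), (u t v)^2
                = ∑ v ∈ Leaves, (u t v)^2 :=
              Finset.sum_fiberwise_of_maps_to hmapsto _
            rw [h1]
            rw [add_comm, Finset.sum_filter_add_sum_filter_not univ (fun v => p v ≠ v)]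
            have := norm_one_sum u t
            calc ∑ v : Fin n, (u t v)^2 = ∑ v : Fin n, u t v * u t v :=
                Finset.sum_congr rfl fun v _ => pow_two (u t v)
              _ = 1 := norm_one_sum u t
          rw [hinner]
          simp
  -- combine
  have hL_le : (Leaves.card : ℝ) + (C.card : ℝ) = n := by exact_mod_cast hcount1
  have hfinal := step1
  rw [Finset.sum_congr rfl (fun t _ => step2 t)] at hfinal
  rw [Finset.sum_add_distrib] at hfinal
  rw [← Finset.mul_sum] at hfinal
  nlinarith [step3, step4, step5]


/-- For a connected graph `G` with `n` vertices and any integer `k` with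
`(3n − 4 + √(8n²e(G) − 8n³ + 9n² − 8n + 16)) / (2n) ≤ k ≤ n`, one has
`S⁺_k(G) ≤ e(G) + k(k+1)/2`. -/
theorem splus_le_conjecture_bound_of_large_k {n : ℕ} (G : SimpleGraph (Fin n))
    (hG : G.Connected) (k : ℕ)
    (hk : (3 * (n : ℝ) - 4 + Real.sqrt (8 * n ^ 2 * (numEdges G : ℝ) - 8 * n ^ 3
        + 9 * n ^ 2 - 8 * n + 16)) / (2 * n) ≤ k)
    (hkn : k ≤ n) :
    Splus G k ≤ (numEdges G : ℝ) + k * (k + 1) / 2 := by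
  classical
  have hn0 : 0 < n := Fin.pos_iff_nonempty.mpr hG.nonempty
  set m := numEdges G with hm
  rcases Nat.eq_zero_or_pos k with rfl | hk1
  · have h0 : Splus G 0 = 0 := by
      simp [Splus, sumKLargest]
    rw [h0]
    positivity
  obtain ⟨S, hScard, hSsum⟩ := sumKLargest_eq_finset_sum (signlessLap_isHermitian G).eigenvalues k
  have hSplus : Splus G k = ∑ i ∈ S, (signlessLap_isHermitian G).eigenvalues i := hSsum
  have hmr : (G.edgeSet.ncard : ℝ) = (m:ℝ) := rfl
  by_cases hcase : 2*m ≤ k^2 + k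
  · have htr := eigen_sum_le_trace (G := G) S
    rw [hSplus]
    rw [hmr] at htr
    have hc : (2*(m:ℝ)) ≤ (k:ℝ)^2 + k := by exact_mod_cast hcase
    linarith [htr, hc]
  · push_neg at hcase
    have hcase2 : k^2 + k + 2 ≤ 2*m := by
      obtain ⟨j, hj⟩ : Even (k^2+k) := by
        have hkk : k^2 + k = k*(k+1) := by ring
        rw [hkk]; exact Nat.even_mul_succ_self k
      omega
    have h2n : (0:ℝ) < 2*n := by positivity
    have hsq0 : Real.sqrt (8 * n ^ 2 * (m : ℝ) - 8 * n ^ 3 + 9 * n ^ 2 - 8 * n + 16)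
        ≤ 2*n*k - 3*n + 4 := by
      have := (div_le_iff₀ h2n).mp hk
      linarith
    have hDle : 8 * n ^ 2 * (m : ℝ) - 8 * n ^ 3 + 9 * n ^ 2 - 8 * n + 16
        ≤ (2*n*k - 3*n + 4)^2 := by
      rcases le_or_gt (8 * n ^ 2 * (m : ℝ) - 8 * n ^ 3 + 9 * n ^ 2 - 8 * n + 16) 0 with hD | hD
      · nlinarith [sq_nonneg (2*(n:ℝ)*k - 3*n + 4)]
      · have h1 := Real.sq_sqrt hD.le
        have h2 : (0:ℝ) ≤ Real.sqrt (8 * n ^ 2 * (m : ℝ) - 8 * n ^ 3 + 9 * n ^ 2 - 8 * n + 16) :=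
          Real.sqrt_nonneg _
        nlinarith [hsq0]
    have hstar : (8*n^2*m : ℤ) ≤ 4*n^2*k^2 - 12*n^2*k + 16*n*k - 16*n + 8*n^3 := by
      have hr : (8*(n:ℝ)^2*m) ≤ 4*n^2*k^2 - 12*n^2*k + 16*n*k - 16*n + 8*n^3 := by
        nlinarith [hDle, sq_nonneg ((n:ℝ))]
      exact_mod_cast hr
    have hn1 : (1:ℤ) ≤ n := by exact_mod_cast hn0
    have hkn' : (k:ℤ) ≤ n := by exact_mod_cast hkn
    have hk1' : (1:ℤ) ≤ k := by exact_mod_cast hk1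
    have hm2 : ((k:ℤ)^2 + k + 2) ≤ 2*m := by exact_mod_cast hcase2
    have h2k : 2*(k:ℤ) ≤ n := by
      by_contra hcon
      push_neg at hcon
      have hcon' : (n:ℤ) + 1 ≤ 2*k := hcon
      have h4n : (0:ℤ) ≤ 4*n^2 := by positivity
      have hE1 := mul_le_mul_of_nonneg_left hm2 h4n
      have hP : (0:ℤ) ≤ 8*n*((2*k - n - 1)*(n - 1)) := by
        have hq1 : (0:ℤ) ≤ 8*n := by linarith
        have hq2 : (0:ℤ) ≤ 2*k - n - 1 := by linarith
        have hq3 : (0:ℤ) ≤ n - 1 := by linarith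
        exact mul_nonneg hq1 (mul_nonneg hq2 hq3)
      linarith [hstar, hE1, hP, sq_nonneg (n:ℤ), hn1]
    have hm3 : 2*(m:ℤ) ≤ (k:ℤ)^2 - 3*k + 2*n := by
      by_contra hcon
      push_neg at hcon
      obtain ⟨j, hj⟩ : ∃ j : ℤ, (k:ℤ)^2 - 3*k = 2*j := by
        rcases Int.even_or_odd (k:ℤ) with ⟨j, hj⟩ | ⟨j, hj⟩
        · exact ⟨2*j^2 - 3*j, by rw [hj]; ring⟩
        · exact ⟨2*j^2 - j - 1, by rw [hj]; ring⟩
      have hcon2 : (k:ℤ)^2 - 3*k + 2*n + 2 ≤ 2*m := by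
        rw [hj] at hcon ⊢
        omega
      have h4n : (0:ℤ) ≤ 4*n^2 := by positivity
      have hE2 := mul_le_mul_of_nonneg_left hcon2 h4n
      have hP2 : (0:ℤ) ≤ 8*n*(n - 2*k) :=
        mul_nonneg (by linarith) (by linarith)
      linarith [hstar, hE2, hP2, hn1]
    have hn2 : 2 ≤ n := by
      have h2 : (2:ℤ) ≤ n := by linarith
      exact_mod_cast h2
    obtain ⟨p, hp⟩ := exists_isStarPart G hG hn2
    have hcore := eigen_sum_le_core G S p hp
    rw [hmr] at hcore
    rw [hSplus]
    have hSk : (S.card : ℝ) ≤ (k:ℝ) := by exact_mod_cast hScard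
    have hm3' : 2*(m:ℝ) ≤ (k:ℝ)^2 - 3*k + 2*n := by exact_mod_cast hm3
    calc ∑ i ∈ S, (signlessLap_isHermitian G).eigenvalues i
        ≤ 2*(m:ℝ) + 2*S.card - n := hcore
      _ ≤ (m:ℝ) + k*(k+1)/2 := by linarith [hSk, hm3']
end

section
/- Let G₁ and G₂ be nonempty connected graphs with n₁ and n₂ vertices respectively. Suppose S⁺_{k_i}(G_i) ≤ e(G_i) + k_i(k_i+1)/2 for all 1 ≤ k_i ≤ n_i and i = 1,2. Let G₁∼G₂ denote a graph obtained from the disjoint union G₁ ∪ G₂ by adding one edge between a vertex of G₁ and a vertex of G₂. Then for all 1 ≤ k ≤ n₁+n₂, S⁺_k(G₁∼G₂) ≤ e(G₁∼G₂) + k(k+1)/2. -/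
open Matrix Polynomial

/-- `G₁ ∼ G₂`: the graph obtained from the disjoint union of `G₁` and `G₂` by adding one
edge between the vertex `u` of `G₁` and the vertex `v` of `G₂`. -/
def connectGraphs {V₁ V₂ : Type*} (G₁ : SimpleGraph V₁) (G₂ : SimpleGraph V₂)
    (u : V₁) (v : V₂) : SimpleGraph (V₁ ⊕ V₂) where
  Adj x y := match x, y with
    | .inl a, .inl b => G₁.Adj a b
    | .inr a, .inr b => G₂.Adj a b
    | .inl a, .inr b => a = u ∧ b = v
    | .inr b, .inl a => a = u ∧ b = v
  symm := by
    constructor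
    rintro (a | a) (b | b) h
    · exact G₁.adj_symm h
    · exact h
    · exact h
    · exact G₂.adj_symm h
  loopless := by
    constructor
    rintro (a | a) h
    · exact G₁.irrefl h
    · exact G₂.irrefl h

lemma sumKLargest_eq_of {V : Type*} [Fintype V] (v : V → ℝ) (L : List ℝ)
    (hL : (L : Multiset ℝ) = Finset.univ.val.map v)
    (hs : L.Pairwise (fun a b => b ≤ a)) (k : ℕ) :
    sumKLargest v k = (L.take k).sum := by
  haveI : Std.Antisymm (fun a b : ℝ => b ≤ a) := ⟨fun a b h1 h2 => le_antisymm h2 h1⟩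
  unfold sumKLargest
  congr 1
  congr 1
  apply fun h1 h2 h3 => List.Perm.eq_of_pairwise' (r := fun a b : ℝ => b ≤ a) h2 h3 h1
  · have p1 := List.mergeSort_perm ((Finset.univ.val.map v).toList) (fun a b => decide (b ≤ a))
    have p2 : (((Finset.univ.val.map v).toList : List ℝ) : Multiset ℝ) = (L : Multiset ℝ) := by
      rw [Multiset.coe_toList, hL]
    exact p1.trans (Multiset.coe_eq_coe.mp p2)
  · have h := List.pairwise_mergeSort (le := fun a b : ℝ => decide (b ≤ a))
      (by intro a b c h1 h2; simp only [decide_eq_true_eq] at *; exact le_trans h2 h1)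
      (by intro a b; simpa using le_total b a)
      ((Finset.univ.val.map v).toList)
    exact h.imp (by intro a b h; simpa using h)
  · exact hs

lemma exists_sorted_list {V : Type*} [Fintype V] (v : V → ℝ) :
    ∃ L : List ℝ, (L : Multiset ℝ) = Finset.univ.val.map v ∧
      L.Pairwise (fun a b => b ≤ a) ∧ L.length = Fintype.card V := by
  refine ⟨((Finset.univ.val.map v).toList.mergeSort (fun a b => decide (b ≤ a))), ?_, ?_, ?_⟩
  · rw [Multiset.coe_eq_coe.mpr (List.mergeSort_perm _ _), Multiset.coe_toList]
  · have h := List.pairwise_mergeSort (le := fun a b : ℝ => decide (b ≤ a))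
      (by intro a b c h1 h2; simp only [decide_eq_true_eq] at *; exact le_trans h2 h1)
      (by intro a b; simpa using le_total b a)
      ((Finset.univ.val.map v).toList)
    exact h.imp (by intro a b h; simpa using h)
  · simp

lemma sum_comp_eq_list_sum {V : Type*} [Fintype V] (v : V → ℝ) (L : List ℝ)
    (hL : (L : Multiset ℝ) = Finset.univ.val.map v) (f : ℝ → ℝ) :
    ∑ i, f (v i) = (L.map f).sum := by
  have : ∑ i, f (v i) = ((Finset.univ.val.map v).map f).sum := by
    rw [Multiset.map_map]; rfl
  rw [this, ← hL, Multiset.map_coe, Multiset.sum_coe]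

lemma list_sum_map_sub (l : List ℝ) (t : ℝ) :
    (l.map (fun x => x - t)).sum = l.sum - l.length * t := by
  induction l with
  | nil => simp
  | cons a l ih => simp [ih]; ring

lemma weighted_le {V : Type*} [Fintype V] (v d : V → ℝ)
    (hd0 : ∀ i, 0 ≤ d i) (hd1 : ∀ i, d i ≤ 1) (k : ℕ) (hk : k ≤ Fintype.card V)
    (hsum : ∑ i, d i = k) : ∑ i, d i * v i ≤ sumKLargest v k := by
  obtain ⟨L, hL, hs, hlen⟩ := exists_sorted_list v
  rw [sumKLargest_eq_of v L hL hs k]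
  rcases Nat.eq_zero_or_pos k with hk0 | hk1
  · subst hk0
    have : ∀ i ∈ Finset.univ, d i = 0 := by
      intro i _
      have := (Finset.sum_eq_zero_iff_of_nonneg (fun i _ => hd0 i)).mp (by simpa using hsum)
      exact this i (Finset.mem_univ i)
    simp only [List.take_zero, List.sum_nil]
    calc ∑ i, d i * v i = 0 := by
          apply Finset.sum_eq_zero; intro i hi; rw [this i hi, zero_mul]
      _ ≤ 0 := le_rfl
  · have hkL : k ≤ L.length := by rw [hlen]; exact hk
    have hk1' : k - 1 < L.length := by omega
    set t := L[k-1] with ht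
    -- sorted access facts
    have hget : ∀ i j : ℕ, (hi : i < L.length) → (hj : j < L.length) → i ≤ j → L[j] ≤ L[i] := by
      intro i j hi hj hij
      rcases eq_or_lt_of_le hij with h | h
      · subst h; exact le_rfl
      · exact (List.pairwise_iff_getElem.mp hs) i j hi hj h
    have htake : ∀ x ∈ L.take k, t ≤ x := by
      intro x hx
      obtain ⟨i, hi, rfl⟩ := List.mem_iff_getElem.mp hx
      have hilt : i < k := lt_of_lt_of_le hi (by simp [List.length_take])
      have hiL : i < L.length := lt_of_lt_of_le hilt hkL
      rw [List.getElem_take]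
      exact hget i (k-1) hiL hk1' (by omega)
    have hdrop : ∀ x ∈ L.drop k, x ≤ t := by
      intro x hx
      obtain ⟨i, hi, rfl⟩ := List.mem_iff_getElem.mp hx
      rw [List.getElem_drop]
      exact hget (k-1) (k+i) hk1' (by simp at hi; omega) (by omega)
    have step1 : ∑ i, d i * v i ≤ ∑ i, (max (v i - t) 0 + t * d i) := by
      apply Finset.sum_le_sum
      intro i _
      rcases le_or_gt t (v i) with h | h
      · have : max (v i - t) 0 = v i - t := max_eq_left (by linarith)
        rw [this]
        nlinarith [hd0 i, hd1 i]
      · have : max (v i - t) 0 = 0 := max_eq_right (by linarith)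
        rw [this]
        nlinarith [hd0 i, hd1 i]
    have step2 : ∑ i, (max (v i - t) 0 + t * d i) = ∑ i, max (v i - t) 0 + t * k := by
      rw [Finset.sum_add_distrib, ← Finset.mul_sum, hsum]
    have step3 : ∑ i, max (v i - t) 0 = (L.map (fun x => max (x - t) 0)).sum :=
      sum_comp_eq_list_sum v L hL (fun x => max (x - t) 0)
    have step4 : (L.map (fun x => max (x - t) 0)).sum
        = ((L.take k).map (fun x => max (x - t) 0)).sum
          + ((L.drop k).map (fun x => max (x - t) 0)).sum := by
      rw [← List.sum_append, ← List.map_append, List.take_append_drop]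
    have step5 : ((L.drop k).map (fun x => max (x - t) 0)).sum = 0 := by
      apply List.sum_eq_zero
      intro x hx
      obtain ⟨y, hy, rfl⟩ := List.mem_map.mp hx
      exact max_eq_right (by linarith [hdrop y hy])
    have step6 : ((L.take k).map (fun x => max (x - t) 0)).sum = (L.take k).sum - k * t := by
      have : (L.take k).map (fun x => max (x - t) 0) = (L.take k).map (fun x => x - t) := by
        apply List.map_congr_left
        intro x hx
        exact max_eq_left (by linarith [htake x hx])
      rw [this, list_sum_map_sub]
      congr 2
      simp [List.length_take]
      omega
    calc ∑ i, d i * v i ≤ ∑ i, max (v i - t) 0 + t * k := step1.trans (le_of_eq step2)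
      _ = (L.take k).sum - k * t + t * k := by rw [step3, step4, step5, add_zero, step6]
      _ = (L.take k).sum := by ring

lemma multiset_lift {α β : Type*} [DecidableEq α] [DecidableEq β] (f : α → β) :
    ∀ (t : Multiset β) (u : Multiset α), t ≤ u.map f → ∃ u' ≤ u, u'.map f = t := by
  intro t
  induction t using Multiset.induction_on with
  | empty => intro u _; exact ⟨0, Multiset.zero_le u, rfl⟩
  | cons a t ih =>
    intro u hle
    have ha : a ∈ u.map f := Multiset.mem_of_le hle (Multiset.mem_cons_self a t)
    obtain ⟨b, hb, rfl⟩ := Multiset.mem_map.mp ha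
    have ht : t ≤ (u.erase b).map f := by
      rw [Multiset.map_erase_of_mem f u hb]
      have := Multiset.erase_le_erase (f b) hle
      simpa using this
    obtain ⟨u'', hu''le, hu''⟩ := ih (u.erase b) ht
    refine ⟨b ::ₘ u'', ?_, by simp [hu'']⟩
    calc b ::ₘ u'' ≤ b ::ₘ u.erase b := Multiset.cons_le_cons b hu''le
      _ = u := Multiset.cons_erase hb

lemma sum_subset_le {V : Type*} [Fintype V] (v : V → ℝ) (s : Finset V) :
    ∑ i ∈ s, v i ≤ sumKLargest v s.card := by
  classical
  have := weighted_le v (fun i => if i ∈ s then (1:ℝ) else 0)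
    (fun i => by positivity) (fun i => by split <;> norm_num) s.card
    (Finset.card_le_univ s) (by simp)
  calc ∑ i ∈ s, v i = ∑ i, (if i ∈ s then (1:ℝ) else 0) * v i := by
        have h : ∀ i, (if i ∈ s then (1:ℝ) else 0) * v i = if i ∈ s then v i else 0 := by
          intro i; split <;> simp
        simp only [h, Finset.sum_ite_mem, Finset.univ_inter]
    _ ≤ _ := this

lemma exists_subset_sumK {V : Type*} [Fintype V] [DecidableEq V] (v : V → ℝ) (k : ℕ)
    (hk : k ≤ Fintype.card V) :
    ∃ s : Finset V, s.card = k ∧ ∑ i ∈ s, v i = sumKLargest v k := by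
  obtain ⟨L, hL, hs, hlen⟩ := exists_sorted_list v
  have htake : ((L.take k : List ℝ) : Multiset ℝ) ≤ Finset.univ.val.map v := by
    rw [← hL]
    exact (List.take_sublist k L).subperm
  obtain ⟨u', hu'le, hu'⟩ := multiset_lift v _ _ htake
  have hnodup : Multiset.Nodup u' := Multiset.nodup_of_le hu'le Finset.univ.nodup
  refine ⟨⟨u', hnodup⟩, ?_, ?_⟩
  · have hc : Multiset.card (u'.map v) = Multiset.card ((L.take k : List ℝ) : Multiset ℝ) := by
      rw [hu']
    simp only [Multiset.card_map, Multiset.coe_card, List.length_take] at hc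
    show Multiset.card u' = k
    rw [hc, hlen.symm ▸ hk |> min_eq_left]
  · rw [sumKLargest_eq_of v L hL hs k]
    have : ∑ i ∈ (⟨u', hnodup⟩ : Finset V), v i = (u'.map v).sum := rfl
    rw [this, hu']
    simp [Multiset.sum_coe]

lemma RCLike_ofReal_real (x : ℝ) : (RCLike.ofReal x : ℝ) = x := rfl

lemma trace_mul_diag {V : Type*} [Fintype V] [DecidableEq V] (N : Matrix V V ℝ) (d : V → ℝ) :
    (N * Matrix.diagonal d).trace = ∑ i, N i i * d i := by
  unfold Matrix.trace
  congr 1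
  ext i
  simp [Matrix.diag, Matrix.mul_diagonal]

lemma proj_posSemidef {V : Type*} [Fintype V] [DecidableEq V] (P : Matrix V V ℝ)
    (hP : P.IsHermitian) (hPP : P * P = P) : P.PosSemidef := by
  have : P = Pᴴ * P := by rw [hP.eq, hPP]
  rw [this]
  exact Matrix.posSemidef_conjTranspose_mul_self P

lemma psd_diag_nonneg {V : Type*} [Fintype V] [DecidableEq V] {N : Matrix V V ℝ}
    (hN : N.PosSemidef) (i : V) : 0 ≤ N i i := by
  have := hN.dotProduct_mulVec_nonneg (Pi.single i 1)
  simpa [dotProduct, Matrix.mulVec_single, Pi.single_apply] using this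

lemma one_sub_proj {V : Type*} [Fintype V] [DecidableEq V] (P : Matrix V V ℝ)
    (hP : P.IsHermitian) (hPP : P * P = P) :
    (1 - P).IsHermitian ∧ (1 - P) * (1 - P) = 1 - P := by
  constructor
  · exact (Matrix.isHermitian_one).sub hP
  · calc (1 - P) * (1 - P) = 1 - P - P + P * P := by noncomm_ring
      _ = 1 - P := by rw [hPP]; abel

theorem trace_proj_le {V : Type*} [Fintype V] [DecidableEq V] (M : Matrix V V ℝ)
    (hM : M.IsHermitian) (P : Matrix V V ℝ) (hP : P.IsHermitian) (hPP : P * P = P)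
    (k : ℕ) (hk : k ≤ Fintype.card V) (htr : P.trace = k) :
    (P * M).trace ≤ sumKLargest hM.eigenvalues k := by
  set U : Matrix V V ℝ := (hM.eigenvectorUnitary : Matrix V V ℝ) with hU
  have hUW : U * star U = 1 := Unitary.coe_mul_star_self hM.eigenvectorUnitary
  have hWU : star U * U = 1 := Unitary.coe_star_mul_self hM.eigenvectorUnitary
  have hspec : M = U * Matrix.diagonal (RCLike.ofReal ∘ hM.eigenvalues) * star U :=
    hM.spectral_theorem
  have hdiag : Matrix.diagonal (RCLike.ofReal ∘ hM.eigenvalues)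
      = Matrix.diagonal hM.eigenvalues := by
    congr 1
  rw [hdiag] at hspec
  set N : Matrix V V ℝ := star U * P * U with hN
  -- trace identity
  have htr1 : (P * M).trace = ∑ i, N i i * hM.eigenvalues i := by
    calc (P * M).trace = (P * (U * Matrix.diagonal hM.eigenvalues * star U)).trace := by
            rw [← hspec]
      _ = ((P * U * Matrix.diagonal hM.eigenvalues) * star U).trace := by
            rw [← mul_assoc, ← mul_assoc]
      _ = (star U * (P * U * Matrix.diagonal hM.eigenvalues)).trace := by
            rw [Matrix.trace_mul_comm]
      _ = (N * Matrix.diagonal hM.eigenvalues).trace := by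
            rw [hN]; rw [← mul_assoc, ← mul_assoc]
      _ = ∑ i, N i i * hM.eigenvalues i := trace_mul_diag _ _
  -- N is psd with diag in [0,1]
  have hNpsd : N.PosSemidef := by
    have h2 := (proj_posSemidef P hP hPP).conjTranspose_mul_mul_same U
    rw [hN, Matrix.star_eq_conjTranspose]
    exact h2
  have hd0 : ∀ i, 0 ≤ N i i := psd_diag_nonneg hNpsd
  have hd1 : ∀ i, N i i ≤ 1 := by
    intro i
    obtain ⟨h1, h2⟩ := one_sub_proj P hP hPP
    have hpsd' := (proj_posSemidef _ h1 h2).conjTranspose_mul_mul_same U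
    rw [← Matrix.star_eq_conjTranspose] at hpsd'
    have : star U * (1 - P) * U = 1 - N := by
      rw [Matrix.mul_sub, Matrix.sub_mul, mul_one, hWU, hN]
    rw [this] at hpsd'
    have := psd_diag_nonneg hpsd' i
    simp only [Matrix.sub_apply, Matrix.one_apply_eq] at this
    linarith
  have hsum : ∑ i, N i i = (k : ℝ) := by
    have : N.trace = P.trace := by
      rw [hN, Matrix.trace_mul_cycle, hUW, one_mul]
    rw [show ∑ i, N i i = N.trace from rfl, this, htr]
  rw [htr1]
  have := weighted_le hM.eigenvalues (fun i => N i i) hd0 hd1 k hk hsum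
  calc ∑ i, N i i * hM.eigenvalues i = ∑ i, (fun i => N i i) i * hM.eigenvalues i := rfl
    _ ≤ _ := this

theorem exists_proj {V : Type*} [Fintype V] [DecidableEq V] (M : Matrix V V ℝ)
    (hM : M.IsHermitian) (k : ℕ) (hk : k ≤ Fintype.card V) :
    ∃ P : Matrix V V ℝ, P.IsHermitian ∧ P * P = P ∧ P.trace = (k : ℝ) ∧
      (P * M).trace = sumKLargest hM.eigenvalues k := by
  obtain ⟨s, hcard, hsum⟩ := exists_subset_sumK hM.eigenvalues k hk
  set U : Matrix V V ℝ := (hM.eigenvectorUnitary : Matrix V V ℝ) with hU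
  have hUW : U * star U = 1 := Unitary.coe_mul_star_self hM.eigenvectorUnitary
  have hWU : star U * U = 1 := Unitary.coe_star_mul_self hM.eigenvectorUnitary
  have hspec : M = U * Matrix.diagonal (RCLike.ofReal ∘ hM.eigenvalues) * star U :=
    hM.spectral_theorem
  have hdiag : Matrix.diagonal (RCLike.ofReal ∘ hM.eigenvalues)
      = Matrix.diagonal hM.eigenvalues := by congr 1
  rw [hdiag] at hspec
  set e : V → ℝ := fun i => if i ∈ s then 1 else 0 with he
  refine ⟨U * Matrix.diagonal e * star U, ?_, ?_, ?_, ?_⟩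
  · unfold Matrix.IsHermitian
    rw [Matrix.conjTranspose_mul, Matrix.conjTranspose_mul, ← Matrix.star_eq_conjTranspose U,
      Matrix.star_eq_conjTranspose, Matrix.conjTranspose_conjTranspose,
      Matrix.diagonal_conjTranspose]
    have : star e = e := by
      funext i; simp [star_trivial]
    rw [this, mul_assoc]
  · calc (U * Matrix.diagonal e * star U) * (U * Matrix.diagonal e * star U)
        = U * Matrix.diagonal e * (star U * U) * Matrix.diagonal e * star U := by
          simp only [mul_assoc]
      _ = U * (Matrix.diagonal e * Matrix.diagonal e) * star U := by
          rw [hWU, mul_one]; simp only [mul_assoc]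
      _ = U * Matrix.diagonal e * star U := by
          rw [Matrix.diagonal_mul_diagonal]
          have h : (fun i => e i * e i) = e := by
            funext i; by_cases hi : i ∈ s <;> simp [he, hi]
          rw [h]
  · rw [Matrix.trace_mul_cycle, hWU, one_mul, Matrix.trace_diagonal]
    rw [← hcard]
    simp [he, Finset.sum_ite_mem]
  · calc (U * Matrix.diagonal e * star U * M).trace
        = (U * Matrix.diagonal e * star U * (U * Matrix.diagonal hM.eigenvalues * star U)).trace := by
          rw [← hspec]
      _ = (U * (Matrix.diagonal e * Matrix.diagonal hM.eigenvalues) * star U).trace := by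
          congr 1
          calc U * Matrix.diagonal e * star U * (U * Matrix.diagonal hM.eigenvalues * star U)
              = U * Matrix.diagonal e * (star U * U) * Matrix.diagonal hM.eigenvalues * star U := by
                simp only [mul_assoc]
            _ = U * (Matrix.diagonal e * Matrix.diagonal hM.eigenvalues) * star U := by
                rw [hWU, mul_one]; simp only [mul_assoc]
      _ = (Matrix.diagonal e * Matrix.diagonal hM.eigenvalues).trace := by
          rw [Matrix.trace_mul_cycle, hWU, one_mul]
      _ = ∑ i, e i * hM.eigenvalues i := by
          rw [Matrix.diagonal_mul_diagonal, Matrix.trace_diagonal]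
      _ = ∑ i ∈ s, hM.eigenvalues i := by
          have h : ∀ i, e i * hM.eigenvalues i = if i ∈ s then hM.eigenvalues i else 0 :=
            fun i => by by_cases hi : i ∈ s <;> simp [he, hi]
          simp only [h, Finset.sum_ite_mem, Finset.univ_inter]
      _ = sumKLargest hM.eigenvalues k := hsum

lemma charmatrix_eq {V : Type*} [Fintype V] [DecidableEq V] (M : Matrix V V ℝ) :
    M.charmatrix = (X : ℝ[X]) • (1 : Matrix V V ℝ[X]) - M.map (fun x => C x) := by
  ext i j
  rw [Matrix.charmatrix_apply]
  rw [Matrix.smul_one_eq_diagonal]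
  simp [Matrix.sub_apply, Matrix.map_apply]

lemma charpoly_similar {V : Type*} [Fintype V] [DecidableEq V] (U D W : Matrix V V ℝ)
    (hUW : U * W = 1) : (U * D * W).charpoly = D.charpoly := by
  have hmap : (U * D * W).map (fun x => (C x : ℝ[X]))
      = U.map (fun x => (C x : ℝ[X])) * D.map (fun x => (C x : ℝ[X])) * W.map (fun x => (C x : ℝ[X])) := by
    rw [show (fun x => (C x : ℝ[X])) = ⇑(C : ℝ →+* ℝ[X]) from rfl, Matrix.map_mul, Matrix.map_mul]
  have hUW' : U.map (fun x => (C x : ℝ[X])) * W.map (fun x => (C x : ℝ[X])) = 1 := by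
    rw [show (fun x => (C x : ℝ[X])) = ⇑(C : ℝ →+* ℝ[X]) from rfl, ← Matrix.map_mul, hUW,
      Matrix.map_one _ (map_zero C) (map_one C)]
  have key : (U * D * W).charmatrix
      = U.map (fun x => (C x : ℝ[X])) * D.charmatrix * W.map (fun x => (C x : ℝ[X])) := by
    rw [charmatrix_eq, charmatrix_eq, hmap]
    rw [Matrix.mul_sub, Matrix.sub_mul]
    congr 1
    rw [mul_smul_comm, mul_one, smul_mul_assoc, hUW']
  unfold Matrix.charpoly
  rw [key, Matrix.det_mul, Matrix.det_mul]
  have hdet : (U.map (fun x => (C x : ℝ[X]))).det * (W.map (fun x => (C x : ℝ[X]))).det = 1 := by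
    rw [← Matrix.det_mul, hUW', Matrix.det_one]
  calc (U.map (fun x => (C x : ℝ[X]))).det * D.charmatrix.det * (W.map (fun x => (C x : ℝ[X]))).det
      = ((U.map (fun x => (C x : ℝ[X]))).det * (W.map (fun x => (C x : ℝ[X]))).det) * D.charmatrix.det := by ring
    _ = D.charmatrix.det := by rw [hdet, one_mul]

lemma charpoly_diag {V : Type*} [Fintype V] [DecidableEq V] (d : V → ℝ) :
    (Matrix.diagonal d).charpoly = ∏ i, (X - C (d i)) := by
  unfold Matrix.charpoly
  have : (Matrix.diagonal d).charmatrix = Matrix.diagonal (fun i => (X : ℝ[X]) - C (d i)) := by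
    ext i j
    by_cases h : i = j
    · subst h; simp [Matrix.charmatrix_apply_eq, Matrix.diagonal_apply_eq]
    · rw [Matrix.charmatrix_apply_ne _ _ _ h, Matrix.diagonal_apply_ne _ h,
        Matrix.diagonal_apply_ne _ h]
      simp
  rw [this, Matrix.det_diagonal]

lemma charpoly_hermitian {V : Type*} [Fintype V] [DecidableEq V] {M : Matrix V V ℝ}
    (hM : M.IsHermitian) : M.charpoly = ∏ i, (X - C (hM.eigenvalues i)) := by
  have hUW : (hM.eigenvectorUnitary : Matrix V V ℝ) * star (hM.eigenvectorUnitary : Matrix V V ℝ) = 1 :=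
    Unitary.coe_mul_star_self hM.eigenvectorUnitary
  have hspec : M = (hM.eigenvectorUnitary : Matrix V V ℝ) * Matrix.diagonal hM.eigenvalues
      * star (hM.eigenvectorUnitary : Matrix V V ℝ) := by
    have h := hM.spectral_theorem
    have hdiag : Matrix.diagonal (RCLike.ofReal ∘ hM.eigenvalues)
        = Matrix.diagonal hM.eigenvalues := by congr 1
    rwa [hdiag] at h
  conv_lhs => rw [hspec]
  rw [charpoly_similar _ _ _ hUW, charpoly_diag]

lemma eigen_multiset {V : Type*} [Fintype V] [DecidableEq V] {M : Matrix V V ℝ}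
    (hM : M.IsHermitian) :
    Multiset.map hM.eigenvalues Finset.univ.val = M.charpoly.roots := by
  rw [charpoly_hermitian hM]
  have : ∏ i, ((X : ℝ[X]) - C (hM.eigenvalues i))
      = (Multiset.map (fun a => (X:ℝ[X]) - C a) (Multiset.map hM.eigenvalues Finset.univ.val)).prod := by
    rw [Multiset.map_map]; rfl
  rw [this, Polynomial.roots_multiset_prod_X_sub_C]

lemma charpoly_fromBlocks' {V₁ V₂ : Type*} [Fintype V₁] [DecidableEq V₁] [Fintype V₂]
    [DecidableEq V₂] (A : Matrix V₁ V₁ ℝ) (B : Matrix V₂ V₂ ℝ) :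
    (Matrix.fromBlocks A 0 0 B).charpoly = A.charpoly * B.charpoly := by
  unfold Matrix.charpoly
  rw [Matrix.charmatrix_fromBlocks]
  have h0 : ((0 : Matrix V₁ V₂ ℝ).map ⇑(C : ℝ →+* ℝ[X])) = 0 := Matrix.map_zero _ (map_zero C)
  have h0' : ((0 : Matrix V₂ V₁ ℝ).map ⇑(C : ℝ →+* ℝ[X])) = 0 := Matrix.map_zero _ (map_zero C)
  rw [h0, h0', neg_zero, neg_zero, Matrix.det_fromBlocks_zero₂₁]

lemma eigen_multiset_fromBlocks {V₁ V₂ : Type*} [Fintype V₁] [DecidableEq V₁] [Fintype V₂]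
    [DecidableEq V₂] {Q₁ : Matrix V₁ V₁ ℝ} {Q₂ : Matrix V₂ V₂ ℝ}
    (h1 : Q₁.IsHermitian) (h2 : Q₂.IsHermitian)
    (hA : (Matrix.fromBlocks Q₁ 0 0 Q₂).IsHermitian) :
    Multiset.map hA.eigenvalues Finset.univ.val
      = Multiset.map h1.eigenvalues Finset.univ.val + Multiset.map h2.eigenvalues Finset.univ.val := by
  rw [eigen_multiset hA, eigen_multiset h1, eigen_multiset h2, charpoly_fromBlocks']
  exact Polynomial.roots_mul (mul_ne_zero (Q₁.charpoly_monic.ne_zero) (Q₂.charpoly_monic.ne_zero))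

lemma sumK_congr {V W : Type*} [Fintype V] [Fintype W] (v : V → ℝ) (w : W → ℝ)
    (h : Multiset.map v Finset.univ.val = Multiset.map w Finset.univ.val) (k : ℕ) :
    sumKLargest v k = sumKLargest w k := by
  obtain ⟨L, hL, hs, _⟩ := exists_sorted_list v
  rw [sumKLargest_eq_of v L hL hs k, sumKLargest_eq_of w L (by rw [hL, h]) hs k]

lemma multiset_map_elim {α β : Type*} [Fintype α] [Fintype β] (f : α → ℝ) (g : β → ℝ) :
    Multiset.map (Sum.elim f g) (Finset.univ : Finset (α ⊕ β)).val
      = Multiset.map f Finset.univ.val + Multiset.map g Finset.univ.val := by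
  rw [← Finset.univ_disjSum_univ, Finset.val_disjSum]
  unfold Multiset.disjSum
  rw [Multiset.map_add, Multiset.map_map, Multiset.map_map]
  simp


section GraphLemmas
variable {V₁ V₂ : Type*} [Fintype V₁] [Fintype V₂] [DecidableEq V₁] [DecidableEq V₂]
  (G₁ : SimpleGraph V₁) (G₂ : SimpleGraph V₂) (u : V₁) (v : V₂)

open Classical in
lemma signlessLap_apply {V : Type*} [Fintype V] [DecidableEq V] (G : SimpleGraph V) (i j : V) :
    signlessLap G i j = (if i = j then (G.degree i : ℝ) else 0) + (if G.Adj i j then 1 else 0) := by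
  unfold signlessLap
  rw [Matrix.add_apply, SimpleGraph.adjMatrix_apply]
  unfold SimpleGraph.degMatrix
  rw [Matrix.diagonal_apply]

open Classical in
lemma degree_sum_formula {V : Type*} [Fintype V] (G : SimpleGraph V) [DecidableRel G.Adj] (a : V) :
    (G.degree a : ℕ) = ∑ b, if G.Adj a b then 1 else 0 := by
  rw [← SimpleGraph.card_neighborFinset_eq_degree, SimpleGraph.neighborFinset_eq_filter,
    Finset.card_filter]

open Classical in
lemma degree_connect_inl (a : V₁) [DecidableRel G₁.Adj]
    [DecidableRel (connectGraphs G₁ G₂ u v).Adj] :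
    (connectGraphs G₁ G₂ u v).degree (Sum.inl a) = G₁.degree a + (if a = u then 1 else 0) := by
  rw [degree_sum_formula, degree_sum_formula, Fintype.sum_sum_type]
  have h1 : ∀ b : V₁, (connectGraphs G₁ G₂ u v).Adj (Sum.inl a) (Sum.inl b) = G₁.Adj a b :=
    fun b => rfl
  have h2 : ∀ b : V₂, (connectGraphs G₁ G₂ u v).Adj (Sum.inl a) (Sum.inr b) = (a = u ∧ b = v) :=
    fun b => rfl
  simp only [h1, h2]
  congr 1
  by_cases ha : a = u
  · subst ha
    simp
  · simp [ha]

open Classical in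
lemma degree_connect_inr (b : V₂) [DecidableRel G₂.Adj]
    [DecidableRel (connectGraphs G₁ G₂ u v).Adj] :
    (connectGraphs G₁ G₂ u v).degree (Sum.inr b) = G₂.degree b + (if b = v then 1 else 0) := by
  rw [degree_sum_formula, degree_sum_formula, Fintype.sum_sum_type]
  have h1 : ∀ a : V₁, (connectGraphs G₁ G₂ u v).Adj (Sum.inr b) (Sum.inl a) = (a = u ∧ b = v) :=
    fun a => rfl
  have h2 : ∀ c : V₂, (connectGraphs G₁ G₂ u v).Adj (Sum.inr b) (Sum.inr c) = G₂.Adj b c :=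
    fun c => rfl
  simp only [h1, h2]
  rw [add_comm (∑ a : V₁, _)]
  congr 1
  by_cases hb : b = v
  · subst hb
    simp
  · simp [hb]

open Classical in
lemma numEdges_eq_card {V : Type*} [Fintype V] (G : SimpleGraph V) [DecidableRel G.Adj]
    [Fintype G.edgeSet] : numEdges G = G.edgeFinset.card := by
  unfold numEdges
  rw [Set.ncard_eq_toFinset_card']
  rfl

open Classical in
lemma numEdges_connect :
    numEdges (connectGraphs G₁ G₂ u v) = numEdges G₁ + numEdges G₂ + 1 := by
  classical
  have h := SimpleGraph.sum_degrees_eq_twice_card_edges (connectGraphs G₁ G₂ u v)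
  have h1 := SimpleGraph.sum_degrees_eq_twice_card_edges G₁
  have h2 := SimpleGraph.sum_degrees_eq_twice_card_edges G₂
  rw [Fintype.sum_sum_type] at h
  have e1 : ∑ a : V₁, (connectGraphs G₁ G₂ u v).degree (Sum.inl a)
      = ∑ a : V₁, (G₁.degree a + if a = u then 1 else 0) := by
    apply Finset.sum_congr rfl
    intro a _
    exact degree_connect_inl G₁ G₂ u v a
  have e2 : ∑ b : V₂, (connectGraphs G₁ G₂ u v).degree (Sum.inr b)
      = ∑ b : V₂, (G₂.degree b + if b = v then 1 else 0) := by
    apply Finset.sum_congr rfl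
    intro b _
    exact degree_connect_inr G₁ G₂ u v b
  rw [e1, e2, Finset.sum_add_distrib, Finset.sum_add_distrib] at h
  simp only [Finset.sum_ite_eq', Finset.mem_univ, if_true] at h
  rw [h1, h2] at h
  have hn : numEdges (connectGraphs G₁ G₂ u v) = (connectGraphs G₁ G₂ u v).edgeFinset.card :=
    numEdges_eq_card _
  have hn1 : numEdges G₁ = G₁.edgeFinset.card := numEdges_eq_card _
  have hn2 : numEdges G₂ = G₂.edgeFinset.card := numEdges_eq_card _
  omega

end GraphLemmas

section Decomp
variable {V₁ V₂ : Type*} [Fintype V₁] [Fintype V₂] [DecidableEq V₁] [DecidableEq V₂]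
  (G₁ : SimpleGraph V₁) (G₂ : SimpleGraph V₂) (u : V₁) (v : V₂)

/-- indicator vector of the two endpoints of the new edge -/
noncomputable def edgeVec : V₁ ⊕ V₂ → ℝ :=
  fun w => if w = Sum.inl u ∨ w = Sum.inr v then 1 else 0

open Classical in
lemma signlessLap_connect_decomp :
    signlessLap (connectGraphs G₁ G₂ u v)
      = Matrix.fromBlocks (signlessLap G₁) 0 0 (signlessLap G₂)
        + Matrix.vecMulVec (edgeVec u v) (edgeVec u v) := by
  classical
  ext x y
  rw [Matrix.add_apply, Matrix.vecMulVec_apply, signlessLap_apply]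
  have hdl : ∀ a : V₁, ((connectGraphs G₁ G₂ u v).degree (Sum.inl a) : ℝ)
      = (G₁.degree a : ℝ) + (if a = u then 1 else 0) := by
    intro a
    rw [degree_connect_inl G₁ G₂ u v a]
    push_cast
    split <;> simp
  have hdr : ∀ b : V₂, ((connectGraphs G₁ G₂ u v).degree (Sum.inr b) : ℝ)
      = (G₂.degree b : ℝ) + (if b = v then 1 else 0) := by
    intro b
    rw [degree_connect_inr G₁ G₂ u v b]
    push_cast
    split <;> simp
  rcases x with a | a <;> rcases y with b | b
  · -- inl a, inl b
    have hadj : (connectGraphs G₁ G₂ u v).Adj (Sum.inl a) (Sum.inl b) = G₁.Adj a b := rfl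
    rw [hadj]
    simp only [Matrix.fromBlocks_apply₁₁, signlessLap_apply, edgeVec, Sum.inl.injEq]
    by_cases hab : a = b
    · subst hab
      rw [if_pos rfl, if_pos rfl, hdl a]
      by_cases hau : a = u <;> simp [hau] <;> ring
    · rw [if_neg hab, if_neg hab]
      by_cases hau : a = u <;> by_cases hbu : b = u <;>
        simp [hau, hbu] <;> first | (exfalso; exact hab (hau.trans hbu.symm)) | ring
  · -- inl a, inr b
    have hadj : (connectGraphs G₁ G₂ u v).Adj (Sum.inl a) (Sum.inr b) = (a = u ∧ b = v) := rfl
    rw [hadj]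
    simp only [Matrix.fromBlocks_apply₁₂, Matrix.zero_apply, edgeVec]
    rw [if_neg (by simp)]
    by_cases hau : a = u <;> by_cases hbv : b = v <;> simp [hau, hbv]
  · -- inr a, inl b
    have hadj : (connectGraphs G₁ G₂ u v).Adj (Sum.inr a) (Sum.inl b) = (b = u ∧ a = v) := rfl
    rw [hadj]
    simp only [Matrix.fromBlocks_apply₂₁, Matrix.zero_apply, edgeVec]
    rw [if_neg (by simp)]
    by_cases hau : b = u <;> by_cases hbv : a = v <;> simp [hau, hbv]
  · -- inr a, inr b
    have hadj : (connectGraphs G₁ G₂ u v).Adj (Sum.inr a) (Sum.inr b) = G₂.Adj a b := rfl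
    rw [hadj]
    simp only [Matrix.fromBlocks_apply₂₂, signlessLap_apply, edgeVec, Sum.inr.injEq]
    by_cases hab : a = b
    · subst hab
      rw [if_pos rfl, if_pos rfl, hdr a]
      by_cases hav : a = v <;> simp [hav] <;> ring
    · rw [if_neg hab, if_neg hab]
      by_cases hav : a = v <;> by_cases hbv : b = v <;>
        simp [hav, hbv] <;> first | (exfalso; exact hab (hav.trans hbv.symm)) | ring

lemma trace_mul_vecMulVec {V : Type*} [Fintype V] (P : Matrix V V ℝ) (x y : V → ℝ) :
    (P * Matrix.vecMulVec x y).trace = y ⬝ᵥ (P *ᵥ x) := by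
  simp only [Matrix.trace, Matrix.diag, Matrix.mul_apply, Matrix.vecMulVec_apply,
    dotProduct, Matrix.mulVec]
  refine Finset.sum_congr rfl fun i _ => ?_
  rw [Finset.mul_sum]
  refine Finset.sum_congr rfl fun j _ => ?_
  ring

lemma edgeVec_dot : (edgeVec u v : V₁ ⊕ V₂ → ℝ) ⬝ᵥ (edgeVec u v) = 2 := by
  classical
  simp only [dotProduct, edgeVec]
  rw [Fintype.sum_sum_type]
  have h1 : ∀ a : V₁, ((if (Sum.inl a : V₁ ⊕ V₂) = Sum.inl u ∨ (Sum.inl a : V₁ ⊕ V₂) = Sum.inr v then (1:ℝ) else 0)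
      * (if (Sum.inl a : V₁ ⊕ V₂) = Sum.inl u ∨ (Sum.inl a : V₁ ⊕ V₂) = Sum.inr v then (1:ℝ) else 0))
      = if a = u then 1 else 0 := by
    intro a
    by_cases h : a = u <;> simp [h]
  have h2 : ∀ b : V₂, ((if (Sum.inr b : V₁ ⊕ V₂) = Sum.inl u ∨ (Sum.inr b : V₁ ⊕ V₂) = Sum.inr v then (1:ℝ) else 0)
      * (if (Sum.inr b : V₁ ⊕ V₂) = Sum.inl u ∨ (Sum.inr b : V₁ ⊕ V₂) = Sum.inr v then (1:ℝ) else 0))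
      = if b = v then 1 else 0 := by
    intro b
    by_cases h : b = v <;> simp [h]
  simp only [h1, h2, Finset.sum_ite_eq', Finset.mem_univ, if_true]
  norm_num

end Decomp

/-- If the nonempty connected graphs `G₁, G₂` satisfy `S⁺_k(Gᵢ) ≤ e(Gᵢ) + kᵢ(kᵢ+1)/2`
for all `1 ≤ kᵢ ≤ nᵢ`, then `G₁ ∼ G₂` satisfies `S⁺_k ≤ e + k(k+1)/2` for all
`1 ≤ k ≤ n₁ + n₂`. -/
theorem splus_le_connectGraphs {n₁ n₂ : ℕ} (G₁ : SimpleGraph (Fin n₁))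
    (G₂ : SimpleGraph (Fin n₂)) (hc₁ : G₁.Connected) (hc₂ : G₂.Connected)
    (hne₁ : 1 ≤ numEdges G₁) (hne₂ : 1 ≤ numEdges G₂)
    (h₁ : ∀ k₁ : ℕ, 1 ≤ k₁ → k₁ ≤ n₁ → Splus G₁ k₁ ≤ (numEdges G₁ : ℝ) + k₁ * (k₁ + 1) / 2)
    (h₂ : ∀ k₂ : ℕ, 1 ≤ k₂ → k₂ ≤ n₂ → Splus G₂ k₂ ≤ (numEdges G₂ : ℝ) + k₂ * (k₂ + 1) / 2)
    (u : Fin n₁) (v : Fin n₂) (k : ℕ) (hk1 : 1 ≤ k) (hkn : k ≤ n₁ + n₂) :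
    Splus (connectGraphs G₁ G₂ u v) k ≤
      (numEdges (connectGraphs G₁ G₂ u v) : ℝ) + k * (k + 1) / 2 := by
  classical
  set M : Matrix (Fin n₁ ⊕ Fin n₂) (Fin n₁ ⊕ Fin n₂) ℝ :=
    signlessLap (connectGraphs G₁ G₂ u v) with hMdef
  have hM : M.IsHermitian := signlessLap_isHermitian (connectGraphs G₁ G₂ u v)
  set A : Matrix (Fin n₁ ⊕ Fin n₂) (Fin n₁ ⊕ Fin n₂) ℝ :=
    Matrix.fromBlocks (signlessLap G₁) 0 0 (signlessLap G₂) with hAdef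
  have hQ1 : (signlessLap G₁).IsHermitian := signlessLap_isHermitian G₁
  have hQ2 : (signlessLap G₂).IsHermitian := signlessLap_isHermitian G₂
  have hA : A.IsHermitian := by
    unfold Matrix.IsHermitian
    rw [hAdef, Matrix.fromBlocks_conjTranspose, hQ1.eq, hQ2.eq,
      Matrix.conjTranspose_zero, Matrix.conjTranspose_zero]
  set x : Fin n₁ ⊕ Fin n₂ → ℝ := edgeVec u v with hxdef
  have hdecomp : M = A + Matrix.vecMulVec x x := signlessLap_connect_decomp G₁ G₂ u v
  have hkW : k ≤ Fintype.card (Fin n₁ ⊕ Fin n₂) := by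
    rw [Fintype.card_sum, Fintype.card_fin, Fintype.card_fin]; exact hkn
  obtain ⟨P, hPh, hPP, hPtr, hPM⟩ := exists_proj M hM k hkW
  have hSplus : Splus (connectGraphs G₁ G₂ u v) k = (P * M).trace := by
    rw [hPM]; rfl
  -- bound for tr(P A)
  have hPA : (P * A).trace ≤ sumKLargest hA.eigenvalues k :=
    trace_proj_le A hA P hPh hPP k hkW hPtr
  -- bound for tr(P B)
  have hPB : (P * Matrix.vecMulVec x x).trace ≤ 2 := by
    rw [trace_mul_vecMulVec]
    obtain ⟨h1, h2⟩ := one_sub_proj P hPh hPP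
    have hps := proj_posSemidef _ h1 h2
    have hx := hps.dotProduct_mulVec_nonneg x
    have hstar : star x = x := by funext i; simp
    rw [hstar, Matrix.sub_mulVec, Matrix.one_mulVec, dotProduct_sub] at hx
    have hxx : x ⬝ᵥ x = 2 := edgeVec_dot u v
    linarith
  -- eigenvalue multiset of A
  set l1 : Fin n₁ → ℝ := hQ1.eigenvalues with hl1
  set l2 : Fin n₂ → ℝ := hQ2.eigenvalues with hl2
  have hme : Multiset.map hA.eigenvalues Finset.univ.val
      = Multiset.map l1 Finset.univ.val + Multiset.map l2 Finset.univ.val :=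
    eigen_multiset_fromBlocks hQ1 hQ2 hA
  have hcong : sumKLargest hA.eigenvalues k = sumKLargest (Sum.elim l1 l2) k := by
    apply sumK_congr
    rw [hme, multiset_map_elim]
  -- split the top-k sum
  obtain ⟨s, hscard, hssum⟩ := exists_subset_sumK (Sum.elim l1 l2) k hkW
  have hs : s.toLeft.disjSum s.toRight = s := Finset.toLeft_disjSum_toRight
  have hcards : s.toLeft.card + s.toRight.card = k := by
    rw [← hscard]
    conv_rhs => rw [← hs]
    rw [Finset.card_disjSum]
  have hsplit : ∑ i ∈ s, Sum.elim l1 l2 i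
      = ∑ i ∈ s.toLeft, l1 i + ∑ i ∈ s.toRight, l2 i := by
    rw [← hs, Finset.sum_disjSum]
    simp
  have hb1 : ∑ i ∈ s.toLeft, l1 i ≤ sumKLargest l1 s.toLeft.card := sum_subset_le l1 _
  have hb2 : ∑ i ∈ s.toRight, l2 i ≤ sumKLargest l2 s.toRight.card := sum_subset_le l2 _
  have hk1n : s.toLeft.card ≤ n₁ := by
    calc s.toLeft.card ≤ (Finset.univ : Finset (Fin n₁)).card := Finset.card_le_univ _
      _ = n₁ := by simp
  have hk2n : s.toRight.card ≤ n₂ := by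
    calc s.toRight.card ≤ (Finset.univ : Finset (Fin n₂)).card := Finset.card_le_univ _
      _ = n₂ := by simp
  -- main chain: Splus ≤ sumKLargest l1 k₁ + sumKLargest l2 k₂ + 2
  have hchain : Splus (connectGraphs G₁ G₂ u v) k
      ≤ sumKLargest l1 s.toLeft.card + sumKLargest l2 s.toRight.card + 2 := by
    rw [hSplus, hdecomp, Matrix.mul_add, Matrix.trace_add]
    have := hcong ▸ hPA
    calc (P * A).trace + (P * Matrix.vecMulVec x x).trace
        ≤ sumKLargest (Sum.elim l1 l2) k + 2 := by
          have h' : (P * A).trace ≤ sumKLargest (Sum.elim l1 l2) k := by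
            rw [← hcong]; exact hPA
          linarith
      _ = (∑ i ∈ s, Sum.elim l1 l2 i) + 2 := by rw [hssum]
      _ = (∑ i ∈ s.toLeft, l1 i + ∑ i ∈ s.toRight, l2 i) + 2 := by rw [hsplit]
      _ ≤ sumKLargest l1 s.toLeft.card + sumKLargest l2 s.toRight.card + 2 := by linarith
  -- edges
  have hE : numEdges (connectGraphs G₁ G₂ u v) = numEdges G₁ + numEdges G₂ + 1 :=
    numEdges_connect G₁ G₂ u v
  have hsum0 : ∀ {T : Type} [Fintype T] (w : T → ℝ), sumKLargest w 0 = 0 := by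
    intro T _ w
    simp [sumKLargest]
  have he1 : (1:ℝ) ≤ (numEdges G₁ : ℝ) := by exact_mod_cast hne₁
  have he2 : (1:ℝ) ≤ (numEdges G₂ : ℝ) := by exact_mod_cast hne₂
  rw [hE]
  push_cast
  rcases Nat.eq_zero_or_pos s.toLeft.card with hz1 | hp1
  · -- all from G₂ : s.toRight.card = k
    have hk2 : s.toRight.card = k := by omega
    have hB2 := h₂ k hk1 (hk2 ▸ hk2n)
    rw [hz1, hk2, hsum0 l1] at hchain
    have : Splus G₂ k = sumKLargest l2 k := rfl
    rw [this] at hB2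
    linarith
  rcases Nat.eq_zero_or_pos s.toRight.card with hz2 | hp2
  · have hk1' : s.toLeft.card = k := by omega
    have hB1 := h₁ k hk1 (hk1' ▸ hk1n)
    rw [hz2, hk1', hsum0 l2] at hchain
    have : Splus G₁ k = sumKLargest l1 k := rfl
    rw [this] at hB1
    linarith
  · -- both nonempty
    have hB1 := h₁ s.toLeft.card hp1 hk1n
    have hB2 := h₂ s.toRight.card hp2 hk2n
    have e1 : Splus G₁ s.toLeft.card = sumKLargest l1 s.toLeft.card := rfl
    have e2 : Splus G₂ s.toRight.card = sumKLargest l2 s.toRight.card := rfl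
    rw [e1] at hB1
    rw [e2] at hB2
    have hc1 : (1:ℝ) ≤ (s.toLeft.card : ℝ) := by exact_mod_cast hp1
    have hc2 : (1:ℝ) ≤ (s.toRight.card : ℝ) := by exact_mod_cast hp2
    have hck : (k:ℝ) = (s.toLeft.card : ℝ) + (s.toRight.card : ℝ) := by
      exact_mod_cast hcards.symm
    nlinarith [hchain, hB1, hB2]
end
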